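/- (Auxiliary lemma: bound on a long rectangle) There exists a constant C₁ > 1 such that the following holds. Let R = R_{[a₁,a₂],[b₁,b₂]} be a diamond rectangle with a(R) ≥ 10·b(R), let M > 0, and let U be discrete harmonic on R with |U(s,b₁)| ≤ M and |U(s,b₁+1/2)| ≤ M for all applicable s, and with |U| ≤ M on at least half of the points of T_{b₂} = {(s,b₂) ∈ R}. Then |U(s,k)| ≤ M·C₁^{a(R)} for all (s,k) ∈ R. -/

import Mathlib

set_option linter.unusedSectionVars false
set_option linter.unusedVariables false

/-- `x` is a half-integer. -/
def HalfInt (x : ℚ) : Prop := ∃ n : ℤ, x = (n : ℚ) / 2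

/-- The rotated lattice `ℤ²_⋄ = {(s,k) ∈ (½ℤ)² : s + k ∈ ℤ}`. -/
def Zdiamond : Set (ℚ × ℚ) :=
  {p | HalfInt p.1 ∧ HalfInt p.2 ∧ ∃ n : ℤ, p.1 + p.2 = (n : ℚ)}

/-- The diamond rectangle `R_{[a₁,a₂],[b₁,b₂]}`. -/
def dRect (a₁ a₂ b₁ b₂ : ℚ) : Set (ℚ × ℚ) :=
  {p | p ∈ Zdiamond ∧ a₁ ≤ p.1 ∧ p.1 ≤ a₂ ∧ b₁ ≤ p.2 ∧ p.2 ≤ b₂}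

/-- `U` is discrete harmonic on the subset `S` of `ℤ²_⋄`:
`4U(s+1/2,k+1/2) = U(s,k) + U(s+1,k) + U(s,k+1) + U(s+1,k+1)` whenever all five
points lie in `S`. -/
def DHarmOn (U : ℚ × ℚ → ℝ) (S : Set (ℚ × ℚ)) : Prop :=
  ∀ s k : ℚ, (s, k) ∈ S → (s + 1, k) ∈ S → (s, k + 1) ∈ S → (s + 1, k + 1) ∈ S →
    (s + 1/2, k + 1/2) ∈ S →
    4 * U (s + 1/2, k + 1/2) = U (s, k) + U (s + 1, k) + U (s, k + 1) + U (s + 1, k + 1)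

namespace BLR

/-- forward difference of a sequence -/
def dd (g : ℕ → ℝ) : ℕ → ℝ := fun i => g (i+1) - g i

/-- iterated forward difference -/
def ddI (k : ℕ) (g : ℕ → ℝ) : ℕ → ℝ := dd^[k] g

@[simp] lemma ddI_zero (g : ℕ → ℝ) : ddI 0 g = g := rfl

lemma ddI_succ (k : ℕ) (g : ℕ → ℝ) : ddI (k+1) g = ddI k (dd g) :=
  Function.iterate_succ_apply dd k g

lemma ddI_succ' (k : ℕ) (g : ℕ → ℝ) : ddI (k+1) g = dd (ddI k g) :=
  Function.iterate_succ_apply' dd k g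

lemma ddI_add_apply (j k : ℕ) (g : ℕ → ℝ) : ddI (j + k) g = ddI j (ddI k g) :=
  Function.iterate_add_apply dd j k g

/-- locality / congruence on a window -/
lemma ddI_congr (k : ℕ) : ∀ (g₁ g₂ : ℕ → ℝ) (i : ℕ),
    (∀ j, i ≤ j → j ≤ i + k → g₁ j = g₂ j) → ddI k g₁ i = ddI k g₂ i := by
  induction k with
  | zero => intro g₁ g₂ i h; exact h i le_rfl (by omega)
  | succ k ih =>
    intro g₁ g₂ i h
    rw [ddI_succ, ddI_succ]
    refine ih _ _ i ?_
    intro j hj hj'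
    simp only [dd]
    rw [h j hj (by omega), h (j+1) (by omega) (by omega)]

/-- window bound -/
lemma abs_ddI_le (k : ℕ) : ∀ (g : ℕ → ℝ) (B : ℝ) (i : ℕ),
    (∀ j, i ≤ j → j ≤ i + k → |g j| ≤ B) → |ddI k g i| ≤ 2^k * B := by
  induction k with
  | zero => intro g B i h; simpa using h i le_rfl (by omega)
  | succ k ih =>
    intro g B i h
    rw [ddI_succ]
    have h2 : ∀ j, i ≤ j → j ≤ i + k → |dd g j| ≤ 2 * B := by
      intro j hj hj'
      have h1 := h j hj (by omega)
      have h1' := h (j+1) (by omega) (by omega)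
      calc |dd g j| ≤ |g (j+1)| + |g j| := abs_sub _ _
        _ ≤ 2 * B := by linarith
    calc |ddI k (dd g) i| ≤ 2^k * (2*B) := ih (dd g) (2*B) i h2
      _ = 2^(k+1) * B := by ring

/-- shift commutes -/
lemma ddI_shift (k : ℕ) : ∀ (g : ℕ → ℝ) (c i : ℕ),
    ddI k (fun j => g (j + c)) i = ddI k g (i + c) := by
  induction k with
  | zero => intro g c i; rfl
  | succ k ih =>
    intro g c i
    rw [ddI_succ, ddI_succ]
    have : dd (fun j => g (j + c)) = fun j => dd g (j + c) := by
      funext j; simp only [dd]; ring_nf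
    rw [this, ih]

/-- discrete Taylor expansion -/
lemma taylor : ∀ (x : ℕ) (g : ℕ → ℝ),
    g x = ∑ k ∈ Finset.range (x+1), (x.choose k : ℝ) * ddI k g 0 := by
  intro x
  induction x with
  | zero => intro g; simp
  | succ x ih =>
    intro g
    have key : ∑ k ∈ Finset.range (x+2), ((x+1).choose k : ℝ) * ddI k g 0
        = (∑ k ∈ Finset.range (x+1), (x.choose k : ℝ) * ddI k g 0)
          + ∑ k ∈ Finset.range (x+1), (x.choose k : ℝ) * ddI k (dd g) 0 := by
      rw [Finset.sum_range_succ' (fun k => ((x+1).choose k : ℝ) * ddI k g 0) (x+1)]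
      have e1 : ∀ j, ((x+1).choose (j+1) : ℝ) = (x.choose j : ℝ) + (x.choose (j+1) : ℝ) := by
        intro j; exact_mod_cast congrArg Nat.cast (Nat.choose_succ_succ x j)
      have : ∑ j ∈ Finset.range (x+1), ((x+1).choose (j+1) : ℝ) * ddI (j+1) g 0
          = (∑ j ∈ Finset.range (x+1), (x.choose j : ℝ) * ddI j (dd g) 0)
            + ∑ j ∈ Finset.range (x+1), (x.choose (j+1) : ℝ) * ddI (j+1) g 0 := by
        rw [← Finset.sum_add_distrib]
        refine Finset.sum_congr rfl ?_
        intro j _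
        rw [e1 j, ddI_succ]
        ring
      rw [this]
      have : (∑ j ∈ Finset.range (x+1), (x.choose (j+1) : ℝ) * ddI (j+1) g 0)
            + ((x+1).choose 0 : ℝ) * ddI 0 g 0
          = ∑ k ∈ Finset.range (x+2), (x.choose k : ℝ) * ddI k g 0 := by
        rw [Finset.sum_range_succ' (fun k => (x.choose k : ℝ) * ddI k g 0) (x+1)]
        simp
      have hzero : (x.choose (x+1) : ℝ) = 0 := by
        simp [Nat.choose_eq_zero_of_lt]
      rw [Finset.sum_range_succ (fun k => (x.choose k : ℝ) * ddI k g 0) (x+1)] at this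
      -- this : Σ_{j<x+1} C(x,j+1) D_{j+1} + C(x+1,0) D_0 = Σ_{k<x+1} C(x,k) D_k + C(x,x+1)*D_{x+1}
      rw [hzero] at this
      ring_nf at this ⊢
      linarith [this]
    rw [key, ← ih g, ← ih (dd g)]
    simp only [dd]
    ring

/-- 3-term linearity of iterated differences -/
lemma ddI_lin3 (k : ℕ) : ∀ (u v w : ℕ → ℝ) (a b c : ℝ) (i : ℕ),
    ddI k (fun x => a * u x + b * v x + c * w x) i
      = a * ddI k u i + b * ddI k v i + c * ddI k w i := by
  induction k with
  | zero => intro u v w a b c i; rfl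
  | succ k ih =>
    intro u v w a b c i
    rw [ddI_succ, ddI_succ, ddI_succ, ddI_succ]
    have : dd (fun x => a * u x + b * v x + c * w x)
        = fun x => a * dd u x + b * dd v x + c * dd w x := by
      funext x; simp only [dd]; ring
    rw [this, ih]

section Core

variable (A m nstar N ρ : ℕ) (f : ℕ → ℕ → ℝ)

def gg (t i : ℕ) : ℝ := (-1:ℝ)^i * f t i
def cc (t k : ℕ) : ℝ := ddI k (gg f t) 0
def PP (t : ℕ) : ℕ → ℝ := fun x => ∑ k ∈ Finset.range t, (x.choose k : ℝ) * cc f t k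
def EE (t : ℕ) : ℕ → ℝ := fun x => gg f t x - PP f t x
def gam (t k : ℕ) : ℝ := ddI k (PP f t) 0
def del (t : ℕ) : ℕ := (t + ρ) % 2
def ee (t : ℕ) : ℝ := if (t + ρ) % 2 = 0 then (-4 : ℝ) else 4
def QQ (t : ℕ) : ℕ → ℝ :=
  fun x => dd (PP f (t+1)) x + dd (PP f (t-1)) x + (- ee ρ t) * PP f t (x + del ρ t)

lemma abs_gg (t i : ℕ) : |gg f t i| = |f t i| := by
  simp [gg, abs_mul, abs_pow]

lemma abs_ee (t : ℕ) : |ee ρ t| = 4 := by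
  unfold ee; split <;> norm_num

lemma del_le_one (t : ℕ) : del ρ t ≤ 1 := Nat.lt_succ_iff.mp (Nat.mod_lt _ (by norm_num))

variable (hrel : ∀ t, 1 ≤ t → t + 1 ≤ m → ∀ i, i ≤ nstar →
    f (t+1) i + f (t+1) (i+1) + f (t-1) i + f (t-1) (i+1) = 4 * f t (i + (t + ρ) % 2))

include hrel in
lemma grel : ∀ t, 1 ≤ t → t + 1 ≤ m → ∀ i, i ≤ nstar →
    dd (gg f (t+1)) i + dd (gg f (t-1)) i = ee ρ t * gg f t (i + del ρ t) := by
  intro t ht htm i hi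
  have h := hrel t ht htm i hi
  have hd : del ρ t = (t + ρ) % 2 := rfl
  have he : ee ρ t = if (t + ρ) % 2 = 0 then (-4:ℝ) else 4 := rfl
  have hp1 : ((-1:ℝ)^i = 1) ∨ ((-1:ℝ)^i = -1) := by
    rcases Nat.even_or_odd i with hp | hp
    · left; exact hp.neg_one_pow
    · right; exact hp.neg_one_pow
  simp only [dd, gg]
  rw [hd, he]
  rcases Nat.mod_two_eq_zero_or_one (t + ρ) with h2 | h2 <;> rw [h2] at h ⊢ <;>
    simp only [if_pos, if_neg, Nat.add_zero, add_zero, pow_succ, one_ne_zero,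
      Nat.zero_ne_one, reduceIte] <;>
    rcases hp1 with hp | hp <;> rw [hp] <;> rw [hp] at * <;> ring_nf <;> ring_nf at h <;>
    linarith [h]

variable (h0 : ∀ i, i ≤ nstar + 1 → |f 0 i| ≤ 1)
variable (h1 : ∀ i, i ≤ nstar + 1 → |f 1 i| ≤ 1)

include hrel h0 h1 in
lemma step1 : ∀ t, t ≤ m → ∀ i, i + t ≤ nstar → |ddI t (gg f t) i| ≤ 2 * 8^t := by
  intro t
  induction t using Nat.strong_induction_on with
  | _ t ih =>
    match t with
    | 0 =>
      intro _ i hi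
      rw [ddI_zero, abs_gg]
      have := h0 i (by omega)
      simpa using by linarith [this]
    | 1 =>
      intro h1m i hi
      have : ddI 1 (gg f 1) i = gg f 1 (i+1) - gg f 1 i := rfl
      rw [this]
      have a1 : |gg f 1 (i+1)| ≤ 1 := by rw [abs_gg]; exact h1 (i+1) (by omega)
      have a2 : |gg f 1 i| ≤ 1 := by rw [abs_gg]; exact h1 i (by omega)
      calc |gg f 1 (i+1) - gg f 1 i| ≤ |gg f 1 (i+1)| + |gg f 1 i| := abs_sub _ _
        _ ≤ 2 * 8^1 := by norm_num; linarith
    | (t+2) =>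
      intro htm i hi
      have hgrel := grel m nstar ρ f hrel (t+1) (by omega) (by omega)
      have e1 : ddI (t+2) (gg f (t+2)) i = ddI (t+1) (dd (gg f (t+2))) i := by
        rw [ddI_succ]
      have e2 : ddI (t+1) (dd (gg f (t+2))) i
          = ddI (t+1) (fun j => ee ρ (t+1) * gg f (t+1) (j + del ρ (t+1))
              + (-1) * dd (gg f t) j + 0 * dd (gg f t) j) i := by
        refine ddI_congr _ _ _ _ ?_
        intro j hj hj'
        have := hgrel j (by omega)
        have this2 : dd (gg f (t + 2)) j + dd (gg f t) j
            = ee ρ (t + 1) * gg f (t + 1) (j + del ρ (t + 1)) := this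
        simp only [zero_mul, add_zero, neg_one_mul]
        linarith [this2]
      have e3 : ddI (t+1) (fun j => ee ρ (t+1) * gg f (t+1) (j + del ρ (t+1))
              + (-1) * dd (gg f t) j + 0 * dd (gg f t) j) i
          = ee ρ (t+1) * ddI (t+1) (fun j => gg f (t+1) (j + del ρ (t+1))) i
            + (-1) * ddI (t+1) (dd (gg f t)) i + 0 := by
        rw [ddI_lin3]; ring
      have e4 : ddI (t+1) (fun j => gg f (t+1) (j + del ρ (t+1))) i
          = ddI (t+1) (gg f (t+1)) (i + del ρ (t+1)) := ddI_shift _ _ _ _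
      have e5 : ddI (t+1) (dd (gg f t)) i = ddI 2 (ddI t (gg f t)) i := by
        rw [← ddI_succ]
        have : t + 1 + 1 = 2 + t := by omega
        rw [this, ddI_add_apply]
      have b1 : |ddI (t+1) (gg f (t+1)) (i + del ρ (t+1))| ≤ 2 * 8^(t+1) := by
        refine ih (t+1) (by omega) (by omega) _ ?_
        have := del_le_one ρ (t+1)
        omega
      have b2 : |ddI 2 (ddI t (gg f t)) i| ≤ 2^2 * (2 * 8^t) := by
        refine abs_ddI_le 2 _ _ _ ?_
        intro j hj hj'
        exact ih t (by omega) (by omega) j (by omega)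
      rw [e1, e2, e3, e4, e5]
      have hee := abs_ee ρ (t+1)
      have h8 : (0:ℝ) < 8^t := by positivity
      calc |ee ρ (t+1) * ddI (t+1) (gg f (t+1)) (i + del ρ (t+1))
            + (-1) * ddI 2 (ddI t (gg f t)) i + 0|
          ≤ |ee ρ (t+1)| * |ddI (t+1) (gg f (t+1)) (i + del ρ (t+1))|
            + |ddI 2 (ddI t (gg f t)) i| := by
            rw [add_zero]
            refine le_trans (abs_add_le _ _) ?_
            rw [abs_mul, abs_mul, abs_neg, abs_one, one_mul]
        _ ≤ 4 * (2 * 8^(t+1)) + 2^2 * (2*8^t) := by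
            rw [hee]
            have := abs_nonneg (ddI (t+1) (gg f (t+1)) (i + del ρ (t+1)))
            nlinarith [b1, b2]
        _ ≤ 2 * 8^(t+2) := by
            rw [pow_succ, pow_succ]
            ring_nf
            nlinarith [h8]

lemma choose_le_two_pow (x k : ℕ) : x.choose k ≤ 2^x := by
  rcases le_or_gt k x with h | h
  · calc x.choose k ≤ ∑ j ∈ Finset.range (x+1), x.choose j :=
        Finset.single_le_sum (fun j _ => Nat.zero_le _) (Finset.mem_range.mpr (by omega))
      _ = 2^x := Nat.sum_range_choose x
  · rw [Nat.choose_eq_zero_of_lt h]; exact Nat.zero_le _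

lemma choose_le_two_pow' (x k : ℕ) : (x.choose k : ℝ) ≤ 2^x := by
  have := choose_le_two_pow x k
  exact_mod_cast this

include hrel h0 h1 in
lemma ccbound : ∀ t, t ≤ m → ∀ k, t ≤ k → k ≤ nstar →
    |cc f t k| ≤ 2^(k-t) * (2 * 8^t) := by
  intro t htm k htk hk
  have e1 : cc f t k = ddI (k-t) (ddI t (gg f t)) 0 := by
    unfold cc
    rw [← ddI_add_apply]
    congr 1
    omega
  rw [e1]
  refine abs_ddI_le _ _ _ _ ?_
  intro j hj hj'
  exact step1 m nstar ρ f hrel h0 h1 t htm j (by omega)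

lemma EE_eq (t x : ℕ) :
    EE f t x = ∑ k ∈ Finset.Ico t (x+1), (x.choose k : ℝ) * cc f t k := by
  have taylor' := taylor x (gg f t)
  unfold EE PP cc
  rw [taylor']
  rcases le_or_gt t (x+1) with h | h
  · rw [← Finset.sum_range_add_sum_Ico (fun k => (x.choose k : ℝ) * ddI k (gg f t) 0) h]
    ring
  · have e0 : Finset.Ico t (x+1) = ∅ := Finset.Ico_eq_empty (by omega)
    rw [e0, Finset.sum_empty,
      ← Finset.sum_range_add_sum_Ico (fun k => (x.choose k : ℝ) * ddI k (gg f t) 0)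
        (le_of_lt h)]
    have hz : ∑ k ∈ Finset.Ico (x+1) t, (x.choose k : ℝ) * ddI k (gg f t) 0 = 0 := by
      refine Finset.sum_eq_zero ?_
      intro k hk
      rw [Finset.mem_Ico] at hk
      rw [Nat.choose_eq_zero_of_lt (by omega)]
      norm_num
    rw [hz]
    ring

variable (hm : 2 ≤ m) (hA : 10*m + 9 ≤ A) (hns : nstar = (A-3)/2)

include hrel h0 h1 hm hA hns in
lemma EEbound : ∀ t, t ≤ m → ∀ x, x ≤ nstar → |EE f t x| ≤ 2^(2*A) := by
  intro t htm x hx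
  rw [EE_eq]
  have hterm : ∀ k ∈ Finset.Ico t (x+1), |(x.choose k : ℝ) * cc f t k|
      ≤ 2^nstar * (2^nstar * (2 * 8^m)) := by
    intro k hk
    rw [Finset.mem_Ico] at hk
    rw [abs_mul, Nat.abs_cast]
    have b1 : (x.choose k : ℝ) ≤ 2^x := choose_le_two_pow' x k
    have b1' : (2:ℝ)^x ≤ 2^nstar := by
      apply pow_le_pow_right₀ (by norm_num) hx
    have b2 : |cc f t k| ≤ 2^(k-t) * (2 * 8^t) :=
      ccbound m nstar ρ f hrel h0 h1 t htm k hk.1 (by omega)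
    have b2' : (2:ℝ)^(k-t) * (2 * 8^t) ≤ 2^nstar * (2 * 8^m) := by
      have c1 : (2:ℝ)^(k-t) ≤ 2^nstar := pow_le_pow_right₀ (by norm_num) (by omega)
      have c2 : (8:ℝ)^t ≤ 8^m := pow_le_pow_right₀ (by norm_num) htm
      have h1 : (0:ℝ) ≤ 2^(k-t) := by positivity
      have h2 : (0:ℝ) < 8^t := by positivity
      nlinarith
    calc (x.choose k : ℝ) * |cc f t k| ≤ 2^nstar * (2^(k-t) * (2 * 8^t)) := by
          have := abs_nonneg (cc f t k)
          have h1 : (0:ℝ) ≤ 2^(k-t) * (2*8^t) := by positivity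
          nlinarith
      _ ≤ 2^nstar * (2^nstar * (2 * 8^m)) := by
          have : (0:ℝ) ≤ 2^nstar := by positivity
          nlinarith
  calc |∑ k ∈ Finset.Ico t (x+1), (x.choose k : ℝ) * cc f t k|
      ≤ ∑ k ∈ Finset.Ico t (x+1), |(x.choose k : ℝ) * cc f t k| :=
        Finset.abs_sum_le_sum_abs _ _
    _ ≤ (Finset.Ico t (x+1)).card * (2^nstar * (2^nstar * (2 * 8^m))) := by
        rw [← nsmul_eq_mul]
        exact Finset.sum_le_card_nsmul _ _ _ hterm
    _ ≤ 2^(nstar+1) * (2^nstar * (2^nstar * (2 * 8^m))) := by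
        have hc : ((Finset.Ico t (x+1)).card : ℝ) ≤ 2^(nstar+1) := by
          have : (Finset.Ico t (x+1)).card ≤ x+1 := by
            rw [Nat.card_Ico]; omega
          have h2 : x + 1 ≤ 2^(nstar+1) := by
            calc x + 1 ≤ nstar + 1 := by omega
              _ ≤ 2^(nstar+1) := (Nat.lt_two_pow_self (n := _)).le
          have : (Finset.Ico t (x+1)).card ≤ 2^(nstar+1) := le_trans this h2
          exact_mod_cast this
        have hp : (0:ℝ) ≤ 2^nstar * (2^nstar * (2 * 8^m)) := by positivity
        nlinarith
    _ ≤ 2^(2*A) := by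
        have e8 : (8:ℝ) = 2^3 := by norm_num
        rw [e8, ← pow_mul]
        have e9 : (2:ℝ)^(nstar+1) * (2^nstar * (2^nstar * (2 * 2^(3*m))))
            = 2^(nstar+1+nstar+nstar+1+3*m) := by
          rw [pow_add, pow_add, pow_add, pow_add]
          ring
        rw [e9]
        apply pow_le_pow_right₀ (by norm_num)
        omega

lemma dd_sum (s : Finset ℕ) (F : ℕ → ℕ → ℝ) :
    dd (fun x => ∑ k ∈ s, F k x) = fun x => ∑ k ∈ s, dd (F k) x := by
  funext x
  simp only [dd]
  rw [← Finset.sum_sub_distrib]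

lemma dd_choose (k : ℕ) (c : ℝ) :
    dd (fun x => (x.choose (k+1) : ℝ) * c) = fun x => (x.choose k : ℝ) * c := by
  funext x
  simp only [dd]
  have : ((x+1).choose (k+1) : ℝ) = (x.choose k : ℝ) + (x.choose (k+1) : ℝ) := by
    exact_mod_cast congrArg Nat.cast (Nat.choose_succ_succ x k)
  rw [this]
  ring

lemma dd_choose0 (c : ℝ) : dd (fun x => (x.choose 0 : ℝ) * c) = fun _ => 0 := by
  funext x
  simp [dd]

lemma ddI_PP (t : ℕ) : ∀ j, ddI j (PP f t)
    = fun x => ∑ k ∈ Finset.range (t-j), (x.choose k : ℝ) * cc f t (k+j) := by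
  intro j
  induction j with
  | zero =>
    funext x
    simp only [ddI_zero, PP, Nat.sub_zero, Nat.add_zero]
  | succ j ih =>
    rw [ddI_succ', ih]
    rcases Nat.eq_zero_or_pos (t - j) with h | h
    · have h2 : t - (j+1) = 0 := by omega
      rw [h, h2]
      simp only [Finset.range_zero, Finset.sum_empty]
      funext x
      simp [dd]
    · obtain ⟨n, hn⟩ : ∃ n, t - j = n + 1 := ⟨t - j - 1, by omega⟩
      have h2 : t - (j+1) = n := by omega
      rw [hn, h2, dd_sum]
      funext x
      rw [Finset.sum_range_succ' (fun k => dd (fun y => ((y.choose k : ℝ)) * cc f t (k+j)) x) n]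
      have e0 : dd (fun y => ((y.choose 0 : ℝ)) * cc f t (0+j)) x = 0 := by
        rw [dd_choose0]
      rw [e0, add_zero]
      refine Finset.sum_congr rfl ?_
      intro k _
      rw [dd_choose k (cc f t (k+1+j))]
      have : k+1+j = k+(j+1) := by omega
      rw [this]

lemma gam_eq (t k : ℕ) : gam f t k = if k < t then cc f t k else 0 := by
  have h0' := congrFun (ddI_PP f t k) 0
  unfold gam
  rw [h0']
  rcases Nat.eq_zero_or_pos (t - k) with h | h
  · rw [h]
    simp only [Finset.range_zero, Finset.sum_empty]
    rw [if_neg (by omega)]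
  · obtain ⟨n, hn⟩ : ∃ n, t - k = n + 1 := ⟨t - k - 1, by omega⟩
    rw [hn, if_pos (by omega)]
    rw [Finset.sum_range_succ' (fun k' => ((0:ℕ).choose k' : ℝ) * cc f t (k'+k)) n]
    have e1 : ∑ k' ∈ Finset.range n, (((0:ℕ).choose (k'+1) : ℝ)) * cc f t (k'+1+k) = 0 := by
      refine Finset.sum_eq_zero ?_
      intro k' _
      rw [Nat.choose_eq_zero_of_lt (by omega)]
      norm_num
    rw [e1]
    simp

include hrel h0 h1 hm hA hns in
lemma QQbound : ∀ t, 1 ≤ t → t + 1 ≤ m → ∀ x, x + 1 ≤ nstar →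
    |QQ ρ f t x| ≤ 2^(2*A+3) := by
  intro t ht htm x hx
  have hg := grel m nstar ρ f hrel t ht htm x (by omega)
  have hq : QQ ρ f t x = -(dd (EE f (t+1)) x) - dd (EE f (t-1)) x
      + ee ρ t * EE f t (x + del ρ t) := by
    unfold QQ EE
    simp only [dd] at hg ⊢
    ring_nf at hg ⊢
    linarith [hg]
  rw [hq]
  have hEB := EEbound A m nstar ρ f hrel h0 h1 hm hA hns
  have b1 : |dd (EE f (t+1)) x| ≤ 2 * 2^(2*A) := by
    have u1 := hEB (t+1) (by omega) (x+1) (by omega)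
    have u2 := hEB (t+1) (by omega) x (by omega)
    calc |dd (EE f (t+1)) x| ≤ |EE f (t+1) (x+1)| + |EE f (t+1) x| := abs_sub _ _
      _ ≤ 2 * 2^(2*A) := by linarith
  have b2 : |dd (EE f (t-1)) x| ≤ 2 * 2^(2*A) := by
    have u1 := hEB (t-1) (by omega) (x+1) (by omega)
    have u2 := hEB (t-1) (by omega) x (by omega)
    calc |dd (EE f (t-1)) x| ≤ |EE f (t-1) (x+1)| + |EE f (t-1) x| := abs_sub _ _
      _ ≤ 2 * 2^(2*A) := by linarith
  have b3 : |ee ρ t * EE f t (x + del ρ t)| ≤ 4 * 2^(2*A) := by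
    rw [abs_mul, abs_ee]
    have := del_le_one ρ t
    have u1 := hEB t (by omega) (x + del ρ t) (by omega)
    linarith
  calc |-(dd (EE f (t+1)) x) - dd (EE f (t-1)) x + ee ρ t * EE f t (x + del ρ t)|
      ≤ |(-(dd (EE f (t+1)) x) - dd (EE f (t-1)) x)| + |ee ρ t * EE f t (x + del ρ t)| :=
        abs_add_le _ _
    _ ≤ |dd (EE f (t+1)) x| + |dd (EE f (t-1)) x| + |ee ρ t * EE f t (x + del ρ t)| := by
        have := abs_sub (-(dd (EE f (t+1)) x)) (dd (EE f (t-1)) x)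
        rw [abs_neg] at this
        linarith
    _ ≤ 2 * 2^(2*A) + 2 * 2^(2*A) + 4 * 2^(2*A) := by linarith
    _ = 2^(2*A+3) := by rw [pow_add]; ring

lemma gamrec (t k : ℕ) (ht : 1 ≤ t) :
    gam f (t+1) (k+1) + gam f (t-1) (k+1)
      = ee ρ t * (gam f t k + (del ρ t : ℝ) * gam f t (k+1)) + ddI k (QQ ρ f t) 0 := by
  have e1 : ddI k (QQ ρ f t) 0
      = ddI k (fun x => 1 * dd (PP f (t+1)) x + 1 * dd (PP f (t-1)) x
          + (- ee ρ t) * (fun y => PP f t (y + del ρ t)) x) 0 := by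
    refine ddI_congr _ _ _ _ ?_
    intro j _ _
    unfold QQ
    ring
  rw [e1, ddI_lin3]
  have e2 : ddI k (dd (PP f (t+1))) 0 = gam f (t+1) (k+1) := by
    rw [← ddI_succ]; rfl
  have e3 : ddI k (dd (PP f (t-1))) 0 = gam f (t-1) (k+1) := by
    rw [← ddI_succ]; rfl
  have e4 : ddI k (fun y => PP f t (y + del ρ t)) 0 = ddI k (PP f t) (del ρ t) := by
    simpa using ddI_shift k (PP f t) (del ρ t) 0
  rw [e2, e3, e4]
  rcases Nat.mod_two_eq_zero_or_one (t+ρ) with h | h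
  · have hd : del ρ t = 0 := h
    rw [hd]
    simp only [Nat.add_zero, Nat.cast_zero]
    unfold gam
    ring
  · have hd : del ρ t = 1 := h
    rw [hd]
    have e5 : ddI k (PP f t) 1 = gam f t k + gam f t (k+1) := by
      have := congrFun (ddI_succ' k (PP f t)) 0
      unfold gam
      simp only [dd] at this
      linarith
    rw [e5]
    simp only [Nat.cast_one]
    ring

end Core

lemma exp_one_le_three : Real.exp 1 ≤ 3 := by
  have := Real.exp_one_lt_d9
  norm_num at this ⊢
  linarith

lemma succ_pow_le (k : ℕ) (hk : 1 ≤ k) : ((k:ℝ)+1)^k ≤ 3 * (k:ℝ)^k := by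
  have hkpos : (0:ℝ) < k := by exact_mod_cast hk
  have h1 : ((k:ℝ)+1) ≤ (k:ℝ) * Real.exp (1/k) := by
    have h := Real.add_one_le_exp (1/(k:ℝ))
    have e : (k:ℝ) * (1/k + 1) = k + 1 := by field_simp; ring
    nlinarith [h]
  calc ((k:ℝ)+1)^k ≤ ((k:ℝ) * Real.exp (1/k))^k := by
        apply pow_le_pow_left₀ (by positivity) h1
    _ = (k:ℝ)^k * Real.exp ((k:ℕ) * (1/k)) := by
        rw [mul_pow, Real.exp_nat_mul]
    _ = (k:ℝ)^k * Real.exp 1 := by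
        congr 1
        congr 1
        field_simp
    _ ≤ 3 * (k:ℝ)^k := by
        have h2 : (0:ℝ) ≤ (k:ℝ)^k := by positivity
        nlinarith [exp_one_le_three]

lemma pow_self_le_factorial (k : ℕ) : (k:ℝ)^k ≤ 3^k * (k.factorial : ℝ) := by
  induction k with
  | zero => norm_num
  | succ k ih =>
    rcases Nat.eq_zero_or_pos k with h | h
    · subst h; norm_num
    · have h2 := succ_pow_le k h
      have h3 : (0:ℝ) < (k:ℝ) + 1 := by positivity
      have h4 : ((k+1).factorial : ℝ) = ((k:ℝ)+1) * (k.factorial : ℝ) := by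
        rw [Nat.factorial_succ]; push_cast; ring
      have e1 : ((k+1:ℕ):ℝ)^(k+1) = ((k:ℝ)+1) * ((k:ℝ)+1)^k := by push_cast; ring
      calc ((k+1:ℕ):ℝ)^(k+1) = ((k:ℝ)+1) * ((k:ℝ)+1)^k := e1
        _ ≤ ((k:ℝ)+1) * (3 * (k:ℝ)^k) := by nlinarith [h2]
        _ ≤ ((k:ℝ)+1) * (3 * (3^k * (k.factorial:ℝ))) := by
            have h5 : (0:ℝ) ≤ 3^k * (k.factorial:ℝ) - (k:ℝ)^k := by linarith [ih]
            nlinarith [h5, h3]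
        _ = 3^(k+1) * ((k+1).factorial : ℝ) := by rw [h4]; ring

/-- product of |i - j| over j ∈ range d \ {i} -/
lemma prod_dist (d i : ℕ) (hi : i < d) :
    ∏ j ∈ (Finset.range d).erase i, (((if i ≤ j then j - i else i - j) : ℕ) : ℝ)
      = (i.factorial : ℝ) * ((d - 1 - i).factorial : ℝ) := by
  have hsplit : (Finset.range d).erase i = Finset.range i ∪ Finset.Ico (i+1) d := by
    ext j
    simp only [Finset.mem_erase, Finset.mem_range, Finset.mem_union, Finset.mem_Ico]
    omega
  have hdisj : Disjoint (Finset.range i) (Finset.Ico (i+1) d) := by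
    rw [Finset.disjoint_left]
    intro j hj hj'
    simp only [Finset.mem_range] at hj
    simp only [Finset.mem_Ico] at hj'
    omega
  rw [hsplit, Finset.prod_union hdisj]
  have e1 : ∏ j ∈ Finset.range i, (((if i ≤ j then j - i else i - j) : ℕ) : ℝ)
      = (i.factorial : ℝ) := by
    rw [← Nat.cast_prod]
    congr 1
    have : ∀ j ∈ Finset.range i, (if i ≤ j then j - i else i - j) = i - j := by
      intro j hj
      simp only [Finset.mem_range] at hj
      rw [if_neg (by omega)]
    rw [Finset.prod_congr rfl this, ← Finset.prod_range_reflect (fun j => i - j) i]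
    have : ∀ j ∈ Finset.range i, i - (i - 1 - j) = j + 1 := by
      intro j hj
      simp only [Finset.mem_range] at hj
      omega
    rw [Finset.prod_congr rfl this]
    exact Finset.prod_range_add_one_eq_factorial i
  have e2 : ∏ j ∈ Finset.Ico (i+1) d, (((if i ≤ j then j - i else i - j) : ℕ) : ℝ)
      = ((d - 1 - i).factorial : ℝ) := by
    rw [← Nat.cast_prod]
    congr 1
    have : ∀ j ∈ Finset.Ico (i+1) d, (if i ≤ j then j - i else i - j) = j - i := by
      intro j hj
      simp only [Finset.mem_Ico] at hj
      rw [if_pos (by omega)]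
    rw [Finset.prod_congr rfl this, Finset.prod_Ico_eq_prod_range]
    have : ∀ j ∈ Finset.range (d - (i+1)), (i + 1 + j - i) = j + 1 := by
      intro j hj
      omega
    rw [Finset.prod_congr rfl this]
    have : d - 1 - i = d - (i+1) := by omega
    rw [this]
    exact Finset.prod_range_add_one_eq_factorial _
  rw [e1, e2]

lemma lagrange_bound (d q Nb : ℕ) (hd : 2 ≤ d) (hq : 1 ≤ q) (c : ℕ → ℝ) (w : ℕ → ℕ)
    (V : ℝ) (hV : 0 ≤ V)
    (hsep : ∀ i j, i < j → j < d → q * (j - i) ≤ w j - w i ∧ w i < w j)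
    (hWb : ∀ j, j < d → w j ≤ Nb)
    (hval : ∀ j, j < d → |∑ k ∈ Finset.range d, ((w j).choose k : ℝ) * c k| ≤ V) :
    ∀ x : ℕ, x ≤ Nb → |∑ k ∈ Finset.range d, (x.choose k : ℝ) * c k|
      ≤ V * d * ((6*Nb:ℕ):ℝ)^(d-1) / ((q:ℝ)*((d:ℝ)-1))^(d-1) := by
  intro x hx
  have hNb1 : 1 ≤ Nb := by
    have h01 := hsep 0 1 (by omega) (by omega)
    have := hWb 1 (by omega)
    omega
  set v : ℕ → ℝ := fun j => (w j : ℝ) with hv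
  set p : Polynomial ℝ :=
    ∑ k ∈ Finset.range d, Polynomial.C (c k) * ((k.factorial : ℝ)⁻¹ • descPochhammer ℝ k)
    with hp
  have heval : ∀ y : ℕ, p.eval (y:ℝ) = ∑ k ∈ Finset.range d, (y.choose k : ℝ) * c k := by
    intro y
    rw [hp, Polynomial.eval_finset_sum]
    refine Finset.sum_congr rfl ?_
    intro k _
    rw [Polynomial.eval_mul, Polynomial.eval_C, Polynomial.eval_smul]
    have h1 : (descPochhammer ℝ k).eval ((y:ℕ):ℝ) = (y.descFactorial k : ℝ) := by
      exact_mod_cast descPochhammer_eval_eq_descFactorial ℝ y k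
    rw [h1]
    have h2 : (y.descFactorial k : ℝ) = (k.factorial : ℝ) * (y.choose k : ℝ) := by
      exact_mod_cast congrArg Nat.cast (Nat.descFactorial_eq_factorial_mul_choose y k)
    rw [h2]
    have h3 : (k.factorial : ℝ) ≠ 0 := Nat.cast_ne_zero.mpr (Nat.factorial_ne_zero k)
    field_simp
    rw [smul_eq_mul, ← mul_assoc (1 / _), one_div, inv_mul_cancel₀ h3, one_mul]
  have hdeg : p.degree < (Finset.range d).card := by
    rw [Finset.card_range]
    apply lt_of_le_of_lt (Polynomial.degree_sum_le _ _)
    rw [Finset.sup_lt_iff (by exact_mod_cast WithBot.bot_lt_coe d)]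
    intro k hk
    rw [Finset.mem_range] at hk
    calc (Polynomial.C (c k) * ((k.factorial : ℝ)⁻¹ • descPochhammer ℝ k)).degree
        ≤ (Polynomial.C (c k)).degree + ((k.factorial:ℝ)⁻¹ • descPochhammer ℝ k).degree :=
          Polynomial.degree_mul_le _ _
      _ ≤ 0 + (descPochhammer ℝ k).degree :=
          add_le_add Polynomial.degree_C_le (Polynomial.degree_smul_le _ _)
      _ = (descPochhammer ℝ k).degree := by rw [zero_add]
      _ ≤ ((descPochhammer ℝ k).natDegree : WithBot ℕ) := Polynomial.degree_le_natDegree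
      _ = (k : WithBot ℕ) := by rw [descPochhammer_natDegree]
      _ < (d : WithBot ℕ) := by exact_mod_cast hk
  have hinj : Set.InjOn v (Finset.range d) := by
    intro a ha b hb hab
    simp only [Finset.coe_range, Set.mem_Iio] at ha hb
    by_contra hne
    rcases lt_or_gt_of_ne hne with h | h
    · have h2 := (hsep a b h hb).2
      have h3 : (w a : ℝ) < (w b : ℝ) := by exact_mod_cast h2
      rw [hv] at hab
      simp only at hab
      linarith
    · have h2 := (hsep b a h ha).2
      have h3 : (w b : ℝ) < (w a : ℝ) := by exact_mod_cast h2
      rw [hv] at hab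
      simp only at hab
      linarith
  have hkey := Lagrange.eq_interpolate (v := v) (s := Finset.range d) hinj hdeg
  have hx2 : p.eval (x:ℝ) = ∑ i ∈ Finset.range d,
      p.eval (v i) * (Lagrange.basis (Finset.range d) v i).eval (x:ℝ) := by
    conv_lhs => rw [hkey]
    rw [Lagrange.interpolate_apply, Polynomial.eval_finset_sum]
    refine Finset.sum_congr rfl ?_
    intro i _
    rw [Polynomial.eval_mul, Polynomial.eval_C]
  -- bound each basis polynomial
  have hbasis : ∀ i ∈ Finset.range d, |(Lagrange.basis (Finset.range d) v i).eval (x:ℝ)|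
      ≤ ((Nb:ℝ))^(d-1) / ((q:ℝ)^(d-1) * ((i.factorial : ℝ) * ((d-1-i).factorial : ℝ))) := by
    intro i hi
    rw [Finset.mem_range] at hi
    have hev : (Lagrange.basis (Finset.range d) v i).eval (x:ℝ)
        = ∏ j ∈ (Finset.range d).erase i, ((v i - v j)⁻¹ * ((x:ℝ) - v j)) := by
      rw [Lagrange.basis, Polynomial.eval_prod]
      refine Finset.prod_congr rfl ?_
      intro j _
      simp [Lagrange.basisDivisor]
    rw [hev, Finset.abs_prod]
    have hfac : ∀ j ∈ (Finset.range d).erase i,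
        |(v i - v j)⁻¹ * ((x:ℝ) - v j)|
          ≤ (Nb:ℝ) / ((q:ℝ) * (((if i ≤ j then j - i else i - j) : ℕ) : ℝ)) := by
      intro j hj
      obtain ⟨hne, hjd⟩ := Finset.mem_erase.mp hj
      rw [Finset.mem_range] at hjd
      have hdist : (q:ℝ) * (((if i ≤ j then j - i else i - j) : ℕ) : ℝ) ≤ |v i - v j| := by
        rcases lt_or_gt_of_ne hne with h | h
        · rw [if_neg (by omega)]
          have hs := hsep j i h hi
          have h1 : (q * (i - j) : ℕ) ≤ ((w i - w j : ℕ)) := hs.1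
          have h2 : (w j : ℝ) < w i := by exact_mod_cast hs.2
          rw [abs_sub_comm, abs_of_neg (by rw [hv]; simp only; linarith)]
          rw [hv]
          simp only
          have h3 : ((w i - w j : ℕ) : ℝ) = (w i : ℝ) - w j := by
            have : w j ≤ w i := le_of_lt hs.2
            push_cast [this]
            ring
          calc (q:ℝ) * ((i - j : ℕ):ℝ) = ((q * (i-j) : ℕ) : ℝ) := by push_cast; ring
            _ ≤ ((w i - w j : ℕ) : ℝ) := by exact_mod_cast h1
            _ = -((w j:ℝ) - (w i:ℝ)) := by rw [h3]; ring
        · rw [if_pos (by omega)]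
          have hs := hsep i j h hjd
          have h1 : (q * (j - i) : ℕ) ≤ ((w j - w i : ℕ)) := hs.1
          have h2 : (w i : ℝ) < w j := by exact_mod_cast hs.2
          rw [abs_of_neg (by rw [hv]; simp only; linarith)]
          rw [hv]
          simp only
          have h3 : ((w j - w i : ℕ) : ℝ) = (w j : ℝ) - w i := by
            have : w i ≤ w j := le_of_lt hs.2
            push_cast [this]
            ring
          calc (q:ℝ) * ((j - i : ℕ):ℝ) = ((q * (j-i) : ℕ) : ℝ) := by push_cast; ring
            _ ≤ ((w j - w i : ℕ) : ℝ) := by exact_mod_cast h1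
            _ = -((w i:ℝ) - (w j:ℝ)) := by rw [h3]; ring
      have hdistpos : (0:ℝ) < (q:ℝ) * (((if i ≤ j then j - i else i - j) : ℕ) : ℝ) := by
        have : 1 ≤ (if i ≤ j then j - i else i - j) := by
          rcases lt_or_gt_of_ne hne with h | h
          · rw [if_neg (by omega)]; omega
          · rw [if_pos (by omega)]; omega
        have h1 : (1:ℝ) ≤ (((if i ≤ j then j - i else i - j) : ℕ) : ℝ) := by exact_mod_cast this
        have h2 : (1:ℝ) ≤ (q:ℝ) := by exact_mod_cast hq
        nlinarith
      have hnum : |(x:ℝ) - v j| ≤ (Nb:ℝ) := by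
        rw [hv]
        simp only
        rw [abs_le]
        have h1 : (0:ℝ) ≤ (w j : ℝ) := by positivity
        have h2 : (w j : ℝ) ≤ Nb := by exact_mod_cast hWb j hjd
        have h3 : (0:ℝ) ≤ (x:ℝ) := by positivity
        have h4 : (x:ℝ) ≤ Nb := by exact_mod_cast hx
        constructor <;> linarith
      rw [abs_mul, abs_inv]
      have habs : (0:ℝ) < |v i - v j| := lt_of_lt_of_le hdistpos hdist
      rw [div_eq_mul_inv, mul_comm ((Nb:ℝ)) _]
      have e1 : |v i - v j|⁻¹ ≤ ((q:ℝ) * (((if i ≤ j then j - i else i - j) : ℕ) : ℝ))⁻¹ :=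
        inv_anti₀ hdistpos hdist
      have e2 : (0:ℝ) ≤ |(x:ℝ) - v j| := abs_nonneg _
      have e3 : (0:ℝ) ≤ |v i - v j|⁻¹ := by positivity
      calc |v i - v j|⁻¹ * |(x:ℝ) - v j|
          ≤ ((q:ℝ) * (((if i ≤ j then j - i else i - j) : ℕ) : ℝ))⁻¹ * |(x:ℝ) - v j| := by
            nlinarith
        _ ≤ ((q:ℝ) * (((if i ≤ j then j - i else i - j) : ℕ) : ℝ))⁻¹ * (Nb:ℝ) := by
            have : (0:ℝ) ≤ ((q:ℝ) * (((if i ≤ j then j - i else i - j) : ℕ) : ℝ))⁻¹ := by positivity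
            nlinarith
    calc ∏ j ∈ (Finset.range d).erase i, |(v i - v j)⁻¹ * ((x:ℝ) - v j)|
        ≤ ∏ j ∈ (Finset.range d).erase i,
            ((Nb:ℝ) / ((q:ℝ) * (((if i ≤ j then j - i else i - j) : ℕ) : ℝ))) := by
          refine Finset.prod_le_prod ?_ hfac
          intro j _
          positivity
      _ = ((Nb:ℝ))^(d-1) / ((q:ℝ)^(d-1) * ((i.factorial : ℝ) * ((d-1-i).factorial : ℝ))) := by
          rw [Finset.prod_div_distrib, Finset.prod_const, Finset.prod_mul_distrib,
            Finset.prod_const]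
          rw [Finset.card_erase_of_mem (Finset.mem_range.mpr hi), Finset.card_range]
          rw [prod_dist d i hi]
  -- combine
  have hcomb : |p.eval (x:ℝ)| ≤ ∑ i ∈ Finset.range d,
      V * (((Nb:ℝ))^(d-1) / ((q:ℝ)^(d-1) * ((i.factorial : ℝ) * ((d-1-i).factorial : ℝ)))) := by
    rw [hx2]
    refine le_trans (Finset.abs_sum_le_sum_abs _ _) ?_
    refine Finset.sum_le_sum ?_
    intro i hi
    rw [abs_mul]
    have h1 : |p.eval (v i)| ≤ V := by
      rw [hv]
      simp only
      rw [heval (w i)]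
      exact hval i (Finset.mem_range.mp hi)
    have h2 := hbasis i hi
    have h3 : (0:ℝ) ≤ |(Lagrange.basis (Finset.range d) v i).eval (x:ℝ)| := abs_nonneg _
    have h4 : (0:ℝ) ≤ ((Nb:ℝ))^(d-1) / ((q:ℝ)^(d-1) * ((i.factorial : ℝ) * ((d-1-i).factorial : ℝ))) := by
      positivity
    nlinarith [abs_nonneg (p.eval (v i))]
  -- numeric: each term ≤ V * (6Nb)^{d-1}/(q(d-1))^{d-1}
  have hterm : ∀ i ∈ Finset.range d,
      V * (((Nb:ℝ))^(d-1) / ((q:ℝ)^(d-1) * ((i.factorial : ℝ) * ((d-1-i).factorial : ℝ))))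
        ≤ V * (((6*Nb:ℕ):ℝ)^(d-1) / ((q:ℝ)*((d:ℝ)-1))^(d-1)) := by
    intro i hi
    rw [Finset.mem_range] at hi
    have hkey : (((d:ℝ))-1)^(d-1) ≤ 6^(d-1) * ((i.factorial : ℝ) * ((d-1-i).factorial : ℝ)) := by
      have c1 : ((d-1).choose i : ℝ) ≤ 2^(d-1) := choose_le_two_pow' (d-1) i
      have c2 : ((d-1).choose i : ℝ) * ((i.factorial : ℝ) * ((d-1-i).factorial : ℝ))
          = ((d-1).factorial : ℝ) := by
        have h := Nat.choose_mul_factorial_mul_factorial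
          (Nat.lt_succ_iff.mp (by omega : i < (d-1)+1))
        have h2 := congrArg (Nat.cast (R := ℝ)) h
        push_cast at h2
        linarith [h2]
      have c3 : (((d-1:ℕ)):ℝ)^(d-1) ≤ 3^(d-1) * ((d-1).factorial : ℝ) :=
        pow_self_le_factorial (d-1)
      have c4 : ((d-1).factorial : ℝ) ≤ 2^(d-1) * ((i.factorial : ℝ) * ((d-1-i).factorial : ℝ)) := by
        rw [← c2]
        have hpos : (0:ℝ) ≤ (i.factorial : ℝ) * ((d-1-i).factorial : ℝ) := by positivity
        nlinarith [c1, hpos]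
      have c5 : (((d:ℝ))-1) = (((d-1:ℕ)):ℝ) := by
        have : (1:ℕ) ≤ d := by omega
        push_cast [this]
        ring
      rw [c5]
      calc (((d-1:ℕ)):ℝ)^(d-1) ≤ 3^(d-1) * ((d-1).factorial : ℝ) := c3
        _ ≤ 3^(d-1) * (2^(d-1) * ((i.factorial : ℝ) * ((d-1-i).factorial : ℝ))) := by
            have : (0:ℝ) < 3^(d-1) := by positivity
            nlinarith [c4]
        _ = 6^(d-1) * ((i.factorial : ℝ) * ((d-1-i).factorial : ℝ)) := by
            rw [show (6:ℝ) = 3*2 by norm_num, mul_pow]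
            ring
    have hVnn := hV
    refine mul_le_mul_of_nonneg_left ?_ hVnn
    have hd1 : (0:ℝ) < (q:ℝ)*((d:ℝ)-1) := by
      have u1 : (2:ℝ) ≤ (d:ℝ) := by exact_mod_cast hd
      have u2 : (1:ℝ) ≤ (q:ℝ) := by exact_mod_cast hq
      nlinarith
    rw [div_le_div_iff₀ (by positivity) (pow_pos hd1 _)]
    have e1 : ((6*Nb:ℕ):ℝ) = 6 * (Nb:ℝ) := by push_cast; ring
    rw [e1, mul_pow, mul_pow]
    have hNbnn : (0:ℝ) ≤ (Nb:ℝ)^(d-1) := by positivity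
    have hqnn : (0:ℝ) ≤ (q:ℝ)^(d-1) := by positivity
    calc (Nb:ℝ)^(d-1) * ((q:ℝ)^(d-1) * ((d:ℝ)-1)^(d-1))
        = ((Nb:ℝ)^(d-1) * (q:ℝ)^(d-1)) * ((d:ℝ)-1)^(d-1) := by ring
      _ ≤ ((Nb:ℝ)^(d-1) * (q:ℝ)^(d-1)) * (6^(d-1) * ((i.factorial : ℝ) * ((d-1-i).factorial : ℝ))) := by
          refine mul_le_mul_of_nonneg_left hkey ?_
          positivity
      _ = 6^(d-1) * (Nb:ℝ)^(d-1) * ((q:ℝ)^(d-1) * ((i.factorial : ℝ) * ((d-1-i).factorial : ℝ))) := by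
          ring
  have hfin : |p.eval (x:ℝ)| ≤ V * d * ((6*Nb:ℕ):ℝ)^(d-1) / ((q:ℝ)*((d:ℝ)-1))^(d-1) := by
    calc |p.eval (x:ℝ)| ≤ ∑ i ∈ Finset.range d,
        V * (((Nb:ℝ))^(d-1) / ((q:ℝ)^(d-1) * ((i.factorial : ℝ) * ((d-1-i).factorial : ℝ)))) :=
          hcomb
      _ ≤ ∑ i ∈ Finset.range d, V * (((6*Nb:ℕ):ℝ)^(d-1) / ((q:ℝ)*((d:ℝ)-1))^(d-1)) :=
          Finset.sum_le_sum hterm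
      _ = V * d * ((6*Nb:ℕ):ℝ)^(d-1) / ((q:ℝ)*((d:ℝ)-1))^(d-1) := by
          rw [Finset.sum_const, Finset.card_range, nsmul_eq_mul]
          ring
  rw [← heval x]
  exact hfin

/-- increment bound for strictly monotone ℕ-valued functions on Fin -/
lemma strictMono_fin_ge {c : ℕ} (F : Fin c → ℕ) (hF : StrictMono F) :
    ∀ (k : ℕ) (a b : Fin c), a.val + k = b.val → F a + k ≤ F b := by
  intro k
  induction k with
  | zero =>
    intro a b hab
    have : a = b := Fin.ext (by omega)
    subst this
    omega
  | succ k ih =>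
    intro a b hab
    have hb : a.val + k < c := by omega
    have h1 := ih a ⟨a.val + k, hb⟩ rfl
    have h2 : F ⟨a.val + k, hb⟩ < F b := by
      apply hF
      rw [Fin.lt_def]
      simp only
      omega
    omega

section Core2

variable (A m nstar N ρ : ℕ) (f : ℕ → ℕ → ℝ) (S : Finset ℕ)
variable (hrel : ∀ t, 1 ≤ t → t + 1 ≤ m → ∀ i, i ≤ nstar →
    f (t+1) i + f (t+1) (i+1) + f (t-1) i + f (t-1) (i+1) = 4 * f t (i + (t + ρ) % 2))
variable (h0 : ∀ i, i ≤ nstar + 1 → |f 0 i| ≤ 1)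
variable (h1 : ∀ i, i ≤ nstar + 1 → |f 1 i| ≤ 1)
variable (hm : 2 ≤ m) (hA : 10*m + 9 ≤ A) (hns : nstar = (A - 3)/2)
variable (hNn : nstar ≤ N) (hNn2 : N ≤ nstar + 2)
variable (hSsub : S ⊆ Finset.range (N+1)) (hScard : N + 1 ≤ 2 * S.card)
variable (hSb : ∀ i ∈ S, |f m i| ≤ 1)

include hrel h0 h1 hm hA hns hNn hNn2 hSsub hScard hSb in
lemma PPm_bound : ∀ x, x ≤ N → |PP f m x| ≤ 2^(3*A) := by
  classical
  -- the subset of good indices within [0, nstar]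
  set S' : Finset ℕ := S.filter (fun i => i ≤ nstar) with hS'
  have hS'sub : S' ⊆ S := Finset.filter_subset _ _
  have hS'le : ∀ i ∈ S', i ≤ nstar := by
    intro i hi
    exact (Finset.mem_filter.mp hi).2
  have hcard2 : S.card ≤ S'.card + 2 := by
    have hsplit := Finset.card_filter_add_card_filter_not
      (s := S) (p := fun i => i ≤ nstar)
    have hsub2 : S.filter (fun i => ¬ (i ≤ nstar)) ⊆ Finset.Ioc nstar N := by
      intro i hi
      rw [Finset.mem_filter] at hi
      have := hSsub hi.1
      rw [Finset.mem_range] at this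
      rw [Finset.mem_Ioc]
      omega
    have hc2 := Finset.card_le_card hsub2
    rw [Nat.card_Ioc] at hc2
    rw [← hS'] at hsplit
    omega
  have hS'm : m ≤ S'.card := by omega
  -- the spacing parameter
  set q : ℕ := (S'.card - 1)/(m-1) with hqdef
  have hmm1 : 0 < m - 1 := by omega
  have hq1 : 1 ≤ q := by
    rw [hqdef, Nat.one_le_div_iff hmm1]
    omega
  have hdm : (m-1) * q + (S'.card - 1) % (m-1) = S'.card - 1 := by
    rw [hqdef]
    exact Nat.div_add_mod _ _
  have hmod : (S'.card - 1) % (m-1) < m - 1 := Nat.mod_lt _ hmm1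
  have hAq : A ≤ 10*(q*(m-1)) := by
    have e2 : q*(m-1) = (m-1)*q := Nat.mul_comm _ _
    rw [e2]
    omega
  have hqm : (m-1) * q ≤ S'.card - 1 := by omega
  -- node function
  set cS := S'.card with hcS
  have hcSpos : 0 < cS := by omega
  set emb := S'.orderEmbOfFin (rfl : S'.card = cS) with hemb
  set w : ℕ → ℕ := fun r => emb ⟨min (r*q) (cS-1), by omega⟩ with hw
  have hwmem : ∀ r, w r ∈ S' := by
    intro r
    rw [hw]
    exact Finset.orderEmbOfFin_mem _ _ _
  have hwidx : ∀ r, r < m → min (r*q) (cS-1) = r*q := by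
    intro r hr
    have : r * q ≤ (m-1) * q := Nat.mul_le_mul_right _ (by omega)
    omega
  have hsep : ∀ i j, i < j → j < m → q * (j - i) ≤ w j - w i ∧ w i < w j := by
    intro i j hij hj
    have hi : i < m := by omega
    have hiq : i*q ≤ (m-1)*q := Nat.mul_le_mul_right _ (by omega)
    have hjq : j*q ≤ (m-1)*q := Nat.mul_le_mul_right _ (by omega)
    have hij2 : i*q ≤ j*q := Nat.mul_le_mul_right _ (by omega)
    have hilt : i*q < cS := by omega
    have hjlt : j*q < cS := by omega
    have e1 : w i = emb ⟨i*q, hilt⟩ := by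
      rw [hw]
      exact congrArg emb (Fin.ext (by simp only; omega))
    have e2 : w j = emb ⟨j*q, hjlt⟩ := by
      rw [hw]
      exact congrArg emb (Fin.ext (by simp only; omega))
    have hstrict : StrictMono emb := emb.strictMono
    have hkey := strictMono_fin_ge emb hstrict (j*q - i*q) ⟨i*q, hilt⟩ ⟨j*q, hjlt⟩
      (by simp only; omega)
    have h5 : q * (j - i) ≤ j*q - i*q := by
      have e : (j-i)*q = j*q - i*q := Nat.sub_mul j i q
      have e' : q * (j-i) = (j-i)*q := Nat.mul_comm _ _
      omega
    have h6 : 1 ≤ j*q - i*q := by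
      have e : (j-i)*q = j*q - i*q := Nat.sub_mul j i q
      have h7 : 1*1 ≤ (j-i)*q := Nat.mul_le_mul (by omega) hq1
      omega
    rw [e1, e2]
    omega
  have hWb : ∀ j, j < m → w j ≤ N := by
    intro j _
    have := hSsub (hS'sub (hwmem j))
    rw [Finset.mem_range] at this
    omega
  -- values at nodes
  have hEB := EEbound A m nstar ρ f hrel h0 h1 hm hA hns
  have hval : ∀ j, j < m → |∑ k ∈ Finset.range m, ((w j).choose k : ℝ) * cc f m k|
      ≤ 1 + 2^(2*A) := by
    intro j _
    have h1' : |gg f m (w j)| ≤ 1 := by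
      rw [abs_gg]
      exact hSb _ (hS'sub (hwmem j))
    have h2' : |EE f m (w j)| ≤ 2^(2*A) := hEB m le_rfl _ (hS'le _ (hwmem j))
    have h3' : (∑ k ∈ Finset.range m, ((w j).choose k : ℝ) * cc f m k) = PP f m (w j) := rfl
    rw [h3']
    have h4' : PP f m (w j) = gg f m (w j) - EE f m (w j) := by
      unfold EE
      ring
    rw [h4']
    calc |gg f m (w j) - EE f m (w j)| ≤ |gg f m (w j)| + |EE f m (w j)| := abs_sub _ _
      _ ≤ 1 + 2^(2*A) := by linarith
  have hVpos : (0:ℝ) ≤ 1 + 2^(2*A) := by positivity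
  have HLag := lagrange_bound m q N hm hq1 (cc f m) w (1 + 2^(2*A)) hVpos hsep hWb hval
  -- numeric cleanup
  intro x hx
  have hL := HLag x hx
  have h3' : (∑ k ∈ Finset.range m, (x.choose k : ℝ) * cc f m k) = PP f m x := rfl
  rw [h3'] at hL
  refine le_trans hL ?_
  -- V * m * (6N)^(m-1) / (q(m-1))^(m-1) ≤ 2^(3A)
  have hqm1pos : (0:ℝ) < (q:ℝ) * ((m:ℝ)-1) := by
    have u1 : (2:ℝ) ≤ (m:ℝ) := by exact_mod_cast hm
    have u2 : (1:ℝ) ≤ (q:ℝ) := by exact_mod_cast hq1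
    nlinarith
  rw [div_le_iff₀ (pow_pos hqm1pos _)]
  have hstep1 : ((6*N:ℕ):ℝ)^(m-1) ≤ 60^(m-1) * ((q:ℝ) * ((m:ℝ)-1))^(m-1) := by
    rw [← mul_pow]
    apply pow_le_pow_left₀ (by positivity)
    have u1 : (6*N:ℕ) ≤ 60*(q*(m-1)) := by
      have : N ≤ A := by omega
      omega
    have u2 : ((6*N:ℕ):ℝ) ≤ ((60*(q*(m-1)):ℕ):ℝ) := by exact_mod_cast u1
    have u3 : ((60*(q*(m-1)):ℕ):ℝ) = 60 * ((q:ℝ) * (((m-1:ℕ)):ℝ)) := by push_cast; ring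
    have u4 : (((m-1:ℕ)):ℝ) = (m:ℝ) - 1 := by
      have : (1:ℕ) ≤ m := by omega
      push_cast [this]
      ring
    rw [u3, u4] at u2
    exact u2
  have hstep2 : (1 + (2:ℝ)^(2*A)) * m * (60:ℝ)^(m-1) ≤ 2^(3*A) := by
    have u1 : (1 + (2:ℝ)^(2*A)) ≤ 2^(2*A+1) := by
      have : (1:ℝ) ≤ 2^(2*A) := by
        simpa using pow_le_pow_right₀ (by norm_num : (1:ℝ) ≤ 2) (Nat.zero_le (2*A))
      rw [pow_succ]
      linarith
    have u2 : (m:ℝ) ≤ 2^m := by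
      have := Nat.lt_two_pow_self (n := m)
      exact_mod_cast this.le
    have u3 : (60:ℝ)^(m-1) ≤ 2^(6*(m-1)) := by
      calc (60:ℝ)^(m-1) ≤ 64^(m-1) := pow_le_pow_left₀ (by norm_num) (by norm_num) _
        _ = 2^(6*(m-1)) := by
          rw [pow_mul]
          norm_num
    calc (1 + (2:ℝ)^(2*A)) * m * (60:ℝ)^(m-1)
        ≤ 2^(2*A+1) * 2^m * 2^(6*(m-1)) := by gcongr
      _ = 2^(2*A+1+m+6*(m-1)) := by
          rw [pow_add, pow_add, pow_add]
          ring
      _ ≤ 2^(3*A) := by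
          apply pow_le_pow_right₀ (by norm_num)
          omega
  calc (1 + (2:ℝ)^(2*A)) * m * ((6*N:ℕ):ℝ)^(m-1)
      ≤ (1 + (2:ℝ)^(2*A)) * m * (60^(m-1) * ((q:ℝ) * ((m:ℝ)-1))^(m-1)) := by
        have p1 : (0:ℝ) ≤ (1 + (2:ℝ)^(2*A)) * m := by positivity
        exact mul_le_mul_of_nonneg_left hstep1 p1
    _ = ((1 + (2:ℝ)^(2*A)) * m * 60^(m-1)) * ((q:ℝ) * ((m:ℝ)-1))^(m-1) := by ring
    _ ≤ 2^(3*A) * ((q:ℝ) * ((m:ℝ)-1))^(m-1) := by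
        refine mul_le_mul_of_nonneg_right hstep2 ?_
        positivity

include hrel h0 h1 hm hA hns hNn hNn2 hSsub hScard hSb in
lemma gamtop : ∀ k, |gam f m k| ≤ 2^(4*A) := by
  intro k
  rcases lt_or_ge k m with hk | hk
  · have e1 : gam f m k = ddI k (PP f m) 0 := rfl
    rw [e1]
    have hb := abs_ddI_le k (PP f m) (2^(3*A)) 0 (by
      intro j _ hj'
      refine PPm_bound A m nstar N ρ f S hrel h0 h1 hm hA hns hNn hNn2 hSsub hScard hSb j ?_
      have : nstar ≥ 5*m + 3 := by omega
      omega)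
    refine le_trans hb ?_
    rw [← pow_add]
    apply pow_le_pow_right₀ (by norm_num)
    omega
  · rw [gam_eq, if_neg (by omega)]
    simp only [abs_zero]
    positivity

include hrel h0 h1 hm hA hns hNn hNn2 hSsub hScard hSb in
lemma gambound : ∀ j, ∀ t, t ≤ m → ∀ k, k + j = m →
    |gam f t k| ≤ 2^(4*A+1) * 3^j := by
  intro j
  induction j with
  | zero =>
    intro t htm k hk
    rw [gam_eq, if_neg (by omega)]
    simp only [abs_zero]
    positivity
  | succ j ihj =>
    intro t htm k hk
    by_cases hkt : k < t
    swap
    · rw [gam_eq, if_neg hkt]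
      simp only [abs_zero]
      positivity
    rcases eq_or_lt_of_le htm with htm2 | htm2
    · rw [htm2]
      have := gamtop A m nstar N ρ f S hrel h0 h1 hm hA hns hNn hNn2 hSsub hScard hSb k
      have h31 : (1:ℝ) ≤ 3^(j+1) := one_le_pow₀ (by norm_num)
      have h2 : (2:ℝ)^(4*A) ≤ 2^(4*A+1) := by
        apply pow_le_pow_right₀ (by norm_num)
        omega
      have hX : (0:ℝ) < (2:ℝ)^(4*A+1) := by positivity
      nlinarith
    · -- t < m
      have ht1 : 1 ≤ t := by omega
      rcases eq_or_lt_of_le ht1 with ht2 | ht2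
    -- t = 1
      · have hk0 : k = 0 := by omega
        subst hk0
        rw [← ht2]
        have e1 : gam f 1 0 = gg f 1 0 := by
          rw [gam_eq, if_pos (by omega)]
          rfl
        rw [e1, abs_gg]
        have := h1 0 (by omega)
        have h31 : (1:ℝ) ≤ 3^(j+1) := one_le_pow₀ (by norm_num)
        have h2 : (1:ℝ) ≤ (2:ℝ)^(4*A+1) := one_le_pow₀ (by norm_num)
        nlinarith
      · -- 2 ≤ t ≤ m-1
        have R := gamrec ρ f t k (by omega)
        have hqq : |ddI k (QQ ρ f t) 0| ≤ 2^k * 2^(2*A+3) := by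
          refine abs_ddI_le _ _ _ _ ?_
          intro x _ hx'
          refine QQbound A m nstar ρ f hrel h0 h1 hm hA hns t (by omega) (by omega) x ?_
          have : nstar ≥ 5*m + 3 := by omega
          omega
        have hqq2 : |ddI k (QQ ρ f t) 0| ≤ 2^(3*A+3) := by
          refine le_trans hqq ?_
          rw [← pow_add]
          apply pow_le_pow_right₀ (by norm_num)
          omega
        have b1 := ihj (t+1) (by omega) (k+1) (by omega)
        have b2 := ihj (t-1) (by omega) (k+1) (by omega)
        have b3 := ihj t (by omega) (k+1) (by omega)
        have hdel : (0:ℝ) ≤ (del ρ t : ℝ) ∧ (del ρ t : ℝ) ≤ 1 := by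
          constructor
          · positivity
          · exact_mod_cast del_le_one ρ t
        have habs : (4:ℝ) * |gam f t k + (del ρ t : ℝ) * gam f t (k+1)|
            ≤ |gam f (t+1) (k+1)| + |gam f (t-1) (k+1)| + |ddI k (QQ ρ f t) 0| := by
          have e : ee ρ t * (gam f t k + (del ρ t : ℝ) * gam f t (k+1))
              = gam f (t+1) (k+1) + gam f (t-1) (k+1) - ddI k (QQ ρ f t) 0 := by
            linarith [R]
          have e2 : |ee ρ t * (gam f t k + (del ρ t : ℝ) * gam f t (k+1))|
              = 4 * |gam f t k + (del ρ t : ℝ) * gam f t (k+1)| := by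
            rw [abs_mul, abs_ee]
          rw [← e2, e]
          calc |gam f (t+1) (k+1) + gam f (t-1) (k+1) - ddI k (QQ ρ f t) 0|
              ≤ |gam f (t+1) (k+1) + gam f (t-1) (k+1)| + |ddI k (QQ ρ f t) 0| := abs_sub _ _
            _ ≤ |gam f (t+1) (k+1)| + |gam f (t-1) (k+1)| + |ddI k (QQ ρ f t) 0| := by
                linarith [abs_add_le (gam f (t+1) (k+1)) (gam f (t-1) (k+1))]
        have htri : |gam f t k| ≤ |gam f t k + (del ρ t : ℝ) * gam f t (k+1)|
            + |gam f t (k+1)| := by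
          have := abs_sub (gam f t k + (del ρ t : ℝ) * gam f t (k+1))
            ((del ρ t : ℝ) * gam f t (k+1))
          simp only [add_sub_cancel_right] at this
          have h2 : |(del ρ t : ℝ) * gam f t (k+1)| ≤ |gam f t (k+1)| := by
            rw [abs_mul]
            have h3 := abs_nonneg (gam f t (k+1))
            have h4 : |(del ρ t : ℝ)| ≤ 1 := by
              rw [abs_of_nonneg hdel.1]
              exact hdel.2
            nlinarith
          linarith
        have hpow : (2:ℝ)^(3*A+3) ≤ 2^(4*A+1) := by
          apply pow_le_pow_right₀ (by norm_num)
          omega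
        have h3succ : (3:ℝ)^(j+1) = 3 * 3^j := by
          rw [pow_succ]
          ring
        have h3j : (1:ℝ) ≤ (3:ℝ)^j := one_le_pow₀ (by norm_num)
        have hXpos : (0:ℝ) < (2:ℝ)^(4*A+1) := by positivity
        rw [h3succ]
        nlinarith [habs, htri, b1, b2, b3, hqq2, hpow]

include hrel h0 h1 hm hA hns hNn hNn2 hSsub hScard hSb in
lemma core_bound : ∀ t, t ≤ m → ∀ i, i ≤ nstar → |f t i| ≤ 2^(9*A) := by
  intro t htm i hi
  have e0 : |f t i| = |gg f t i| := (abs_gg f t i).symm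
  rw [e0]
  have e1 : gg f t i = PP f t i + EE f t i := by
    unfold EE
    ring
  rw [e1]
  have hPP : |PP f t i| ≤ t * (2^A * (2^(4*A+1) * 3^m)) := by
    unfold PP
    have hterm : ∀ k ∈ Finset.range t, |(i.choose k : ℝ) * cc f t k|
        ≤ 2^A * (2^(4*A+1) * 3^m) := by
      intro k hk
      rw [Finset.mem_range] at hk
      rw [abs_mul, Nat.abs_cast]
      have c1 : (i.choose k : ℝ) ≤ 2^A := by
        refine le_trans (choose_le_two_pow' i k) ?_
        apply pow_le_pow_right₀ (by norm_num)
        omega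
      have c2 : cc f t k = gam f t k := by
        rw [gam_eq, if_pos hk]
      have c3 : |cc f t k| ≤ 2^(4*A+1) * 3^(m-k) := by
        rw [c2]
        exact gambound A m nstar N ρ f S hrel h0 h1 hm hA hns hNn hNn2 hSsub hScard hSb
          (m-k) t htm k (by omega)
      have c4 : (2:ℝ)^(4*A+1) * 3^(m-k) ≤ 2^(4*A+1) * 3^m := by
        have : (3:ℝ)^(m-k) ≤ 3^m := pow_le_pow_right₀ (by norm_num) (by omega)
        have h2 : (0:ℝ) < (2:ℝ)^(4*A+1) := by positivity
        nlinarith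
      have c5 : (0:ℝ) ≤ (i.choose k : ℝ) := by positivity
      have c6 := abs_nonneg (cc f t k)
      have c7 : (0:ℝ) < (2:ℝ)^A := by positivity
      nlinarith
    calc |∑ k ∈ Finset.range t, (i.choose k : ℝ) * cc f t k|
        ≤ ∑ k ∈ Finset.range t, |(i.choose k : ℝ) * cc f t k| :=
          Finset.abs_sum_le_sum_abs _ _
      _ ≤ (Finset.range t).card * (2^A * (2^(4*A+1) * 3^m)) := by
          rw [← nsmul_eq_mul]
          exact Finset.sum_le_card_nsmul _ _ _ hterm
      _ = t * (2^A * (2^(4*A+1) * 3^m)) := by rw [Finset.card_range]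
  have hEE : |EE f t i| ≤ 2^(2*A) := EEbound A m nstar ρ f hrel h0 h1 hm hA hns t htm i hi
  have hnum : (t:ℝ) * (2^A * (2^(4*A+1) * 3^m)) + 2^(2*A) ≤ 2^(9*A) := by
    have u1 : (t:ℝ) ≤ 2^A := by
      have v1 : t ≤ 2^A := by
        calc t ≤ m := htm
          _ ≤ A := by omega
          _ ≤ 2^A := (Nat.lt_two_pow_self (n := A)).le
      exact_mod_cast v1
    have u2 : (3:ℝ)^m ≤ 2^(2*m) := by
      calc (3:ℝ)^m ≤ 4^m := pow_le_pow_left₀ (by norm_num) (by norm_num) m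
        _ = 2^(2*m) := by rw [pow_mul]; norm_num
    have u3 : (t:ℝ) * (2^A * (2^(4*A+1) * 3^m)) ≤ 2^A * (2^A * (2^(4*A+1) * 2^(2*m))) := by
      have p1 : (0:ℝ) ≤ (t:ℝ) := by positivity
      gcongr
    have u4 : (2:ℝ)^A * (2^A * (2^(4*A+1) * 2^(2*m))) = 2^(A+A+(4*A+1)+2*m) := by
      rw [pow_add, pow_add, pow_add]
      ring
    have u5 : (2:ℝ)^(A+A+(4*A+1)+2*m) ≤ 2^(9*A-1) := by
      apply pow_le_pow_right₀ (by norm_num)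
      omega
    have u6 : (2:ℝ)^(2*A) ≤ 2^(9*A-1) := by
      apply pow_le_pow_right₀ (by norm_num)
      omega
    have u7 : (2:ℝ)^(9*A-1) + 2^(9*A-1) ≤ 2^(9*A) := by
      have e : (2:ℝ)^(9*A-1) + 2^(9*A-1) = 2^(9*A-1+1) := by
        rw [pow_succ]
        ring
      rw [e]
      apply pow_le_pow_right₀ (by norm_num)
      omega
    calc (t:ℝ) * (2^A * (2^(4*A+1) * 3^m)) + 2^(2*A)
        ≤ 2^(9*A-1) + 2^(9*A-1) := by
          have := le_trans u3 (le_of_eq u4)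
          linarith [le_trans this u5, u6]
      _ ≤ 2^(9*A) := u7
  calc |PP f t i + EE f t i| ≤ |PP f t i| + |EE f t i| := abs_add_le _ _
    _ ≤ t * (2^A * (2^(4*A+1) * 3^m)) + 2^(2*A) := by linarith
    _ ≤ 2^(9*A) := hnum

end Core2
section Wrapper

variable (a₁ a₂ b₁ b₂ : ℚ) (za zb z : ℤ) (A m : ℕ)

/-- the lattice point in row `t`, position `i` -/
def pt (t i : ℕ) : ℚ × ℚ := (a₁ + ((t % 2 : ℕ) : ℚ)/2 + (i:ℚ), b₁ + (t:ℚ)/2)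

variable (hza : a₁ = (za:ℚ)/2) (hzb : b₁ = (zb:ℚ)/2) (hz : a₁ + b₁ = (z:ℚ))
variable (hA : (A:ℚ) = 2*(a₂ - a₁)) (hm : (m:ℚ) = 2*(b₂ - b₁))

include hza hzb hz hA hm in
lemma pt_mem (t i : ℕ) (ht : t ≤ m) (hi : 2*i + t % 2 ≤ A) :
    pt a₁ b₁ t i ∈ dRect a₁ a₂ b₁ b₂ := by
  have hz2 : (za:ℚ) + zb = 2*z := by
    rw [hza, hzb] at hz
    field_simp at hz
    push_cast
    linarith
  obtain ⟨ε, hε⟩ : ∃ ε : ℕ, t % 2 = ε := ⟨t % 2, rfl⟩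
  have hε1 : ε ≤ 1 := by omega
  obtain ⟨D, hD⟩ : ∃ D : ℕ, 2*D = t + ε := ⟨(t+ε)/2, by omega⟩
  unfold pt dRect Zdiamond HalfInt
  rw [hε]
  have hDq : (2:ℚ) * (D:ℚ) = (t:ℚ) + (ε:ℚ) := by exact_mod_cast congrArg (Nat.cast (R:=ℚ)) hD
  have hiq : 2*(i:ℚ) + (ε:ℚ) ≤ (A:ℚ) := by
    have : ((2*i + ε : ℕ):ℚ) ≤ ((A:ℕ):ℚ) := by exact_mod_cast (by omega : 2*i + ε ≤ A)
    push_cast at this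
    linarith
  have htq : (t:ℚ) ≤ (m:ℚ) := by exact_mod_cast ht
  refine ⟨⟨⟨za + ε + 2*i, ?_⟩, ⟨zb + t, ?_⟩, ⟨z + D + i, ?_⟩⟩, ?_, ?_, ?_, ?_⟩
  · show a₁ + (ε : ℚ)/2 + (i:ℚ) = ((za + ε + 2*i : ℤ) : ℚ)/2
    rw [hza]
    push_cast
    ring
  · show b₁ + (t:ℚ)/2 = ((zb + t : ℤ):ℚ)/2
    rw [hzb]
    push_cast
    ring
  · show (a₁ + (ε : ℚ)/2 + (i:ℚ)) + (b₁ + (t:ℚ)/2) = ((z + D + i : ℤ) : ℚ)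
    rw [hza, hzb]
    push_cast
    linarith
  · show a₁ ≤ a₁ + (ε : ℚ)/2 + (i:ℚ)
    have u1 : (0:ℚ) ≤ (ε : ℚ) := by positivity
    have u2 : (0:ℚ) ≤ (i:ℚ) := by positivity
    linarith
  · show a₁ + (ε : ℚ)/2 + (i:ℚ) ≤ a₂
    have u2 : a₂ = a₁ + (A:ℚ)/2 := by linarith [hA]
    rw [u2]
    linarith
  · show b₁ ≤ b₁ + (t:ℚ)/2
    have : (0:ℚ) ≤ (t:ℚ) := by positivity
    linarith
  · show b₁ + (t:ℚ)/2 ≤ b₂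
    have u2 : b₂ = b₁ + (m:ℚ)/2 := by linarith [hm]
    rw [u2]
    linarith

include hza hzb hz hA hm in
lemma pt_rep (p : ℚ × ℚ) (hp : p ∈ dRect a₁ a₂ b₁ b₂) :
    ∃ t i : ℕ, t ≤ m ∧ 2*i + t % 2 ≤ A ∧ p = pt a₁ b₁ t i := by
  obtain ⟨⟨⟨zs, hzs⟩, ⟨zk, hzk⟩, ⟨n, hn⟩⟩, hs1, hs2, hk1, hk2⟩ := hp
  have hz2 : za + zb = 2*z := by
    have h' : (za:ℚ) + zb = 2*z := by
      rw [hza, hzb] at hz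
      field_simp at hz
      push_cast
      linarith
    exact_mod_cast h'
  have hn2 : zs + zk = 2*n := by
    have h' : (zs:ℚ) + zk = 2*n := by
      rw [hzs, hzk] at hn
      field_simp at hn
      push_cast
      linarith
    exact_mod_cast h'
  have hsa : za ≤ zs := by
    rw [hza, hzs] at hs1
    have : (za:ℚ) ≤ zs := by linarith
    exact_mod_cast this
  have hka : zb ≤ zk := by
    rw [hzb, hzk] at hk1
    have : (zb:ℚ) ≤ zk := by linarith
    exact_mod_cast this
  have hsA : zs ≤ za + A := by
    have u2 : a₂ = a₁ + (A:ℚ)/2 := by linarith [hA]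
    rw [hzs, u2, hza] at hs2
    have : (zs:ℚ) ≤ za + A := by push_cast at hs2 ⊢; linarith
    exact_mod_cast this
  have hkm : zk ≤ zb + m := by
    have u2 : b₂ = b₁ + (m:ℚ)/2 := by linarith [hm]
    rw [hzk, u2, hzb] at hk2
    have : (zk:ℚ) ≤ zb + m := by push_cast at hk2 ⊢; linarith
    exact_mod_cast this
  obtain ⟨t, ht⟩ : ∃ t : ℕ, (t:ℤ) = zk - zb := ⟨(zk - zb).toNat, Int.toNat_of_nonneg (by omega)⟩
  obtain ⟨ε, hε⟩ : ∃ ε : ℕ, t % 2 = ε := ⟨t % 2, rfl⟩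
  have hεz : (ε:ℤ) = (zs - za) % 2 := by
    have e1 : ((t % 2 : ℕ):ℤ) = (t:ℤ) % 2 := by omega
    rw [hε] at e1
    omega
  obtain ⟨i, hi⟩ : ∃ i : ℕ, (i:ℤ) = (zs - za - ε)/2 := by
    refine ⟨((zs - za - ε)/2).toNat, Int.toNat_of_nonneg ?_⟩
    omega
  have hi2 : 2*(i:ℤ) = zs - za - ε := by omega
  refine ⟨t, i, by omega, by omega, ?_⟩
  have e1 : p.1 = a₁ + ((t % 2 : ℕ) : ℚ)/2 + ((i : ℕ):ℚ) := by
    rw [hzs, hza, hε]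
    have e2 : (zs:ℚ) = za + (ε:ℚ) + 2*(i:ℚ) := by
      have e3 : zs = za + (ε:ℤ) + 2*(i:ℤ) := by omega
      exact_mod_cast congrArg (fun x : ℤ => (x : ℚ)) e3
    rw [e2]
    push_cast
    ring
  have e2 : p.2 = b₁ + (t:ℚ)/2 := by
    rw [hzk, hzb]
    have e3 : (zk:ℚ) = zb + (t:ℚ) := by
      have : zk = zb + (t:ℤ) := by omega
      exact_mod_cast congrArg (fun x : ℤ => (x : ℚ)) this
    rw [e3]
    ring
  have : p = (p.1, p.2) := rfl
  rw [this, e1, e2]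
  rfl

include hza hzb hz hA hm in
lemma frel (U : ℚ × ℚ → ℝ) (hU : DHarmOn U (dRect a₁ a₂ b₁ b₂)) :
    ∀ t, 1 ≤ t → t + 1 ≤ m → ∀ i, i + 1 ≤ (A - (t+1) % 2)/2 →
    U (pt a₁ b₁ (t+1) i) + U (pt a₁ b₁ (t+1) (i+1)) + U (pt a₁ b₁ (t-1) i)
      + U (pt a₁ b₁ (t-1) (i+1)) = 4 * U (pt a₁ b₁ t (i + (t+1) % 2)) := by
  intro t ht htm i hi
  set s : ℚ := a₁ + (((t-1) % 2 : ℕ) : ℚ)/2 + (i:ℚ) with hs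
  set k : ℚ := b₁ + ((t-1 : ℕ):ℚ)/2 with hk
  have m1 := pt_mem a₁ a₂ b₁ b₂ za zb z A m hza hzb hz hA hm (t-1) i (by omega) (by omega)
  have m2 := pt_mem a₁ a₂ b₁ b₂ za zb z A m hza hzb hz hA hm (t-1) (i+1) (by omega) (by omega)
  have m3 := pt_mem a₁ a₂ b₁ b₂ za zb z A m hza hzb hz hA hm (t+1) i (by omega) (by omega)
  have m4 := pt_mem a₁ a₂ b₁ b₂ za zb z A m hza hzb hz hA hm (t+1) (i+1) (by omega) (by omega)
  have m5 := pt_mem a₁ a₂ b₁ b₂ za zb z A m hza hzb hz hA hm t (i + (t+1) % 2)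
    (by omega) (by omega)
  have e1 : pt a₁ b₁ (t-1) i = (s, k) := rfl
  have e2 : pt a₁ b₁ (t-1) (i+1) = (s + 1, k) := by
    unfold pt
    rw [hs, hk]
    rw [Prod.mk.injEq]
    constructor
    · push_cast
      ring
    · rfl
  have e3 : pt a₁ b₁ (t+1) i = (s, k + 1) := by
    unfold pt
    rw [hs, hk]
    rw [Prod.mk.injEq]
    have hmod : (t+1) % 2 = (t-1) % 2 := by omega
    have hcast : ((t+1 : ℕ):ℚ) = ((t-1:ℕ):ℚ) + 2 := by
      have : (t+1 : ℕ) = (t-1) + 2 := by omega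
      rw [this]
      push_cast
      ring
    constructor
    · rw [hmod]
    · rw [hcast]
      ring
  have e4 : pt a₁ b₁ (t+1) (i+1) = (s + 1, k + 1) := by
    unfold pt
    rw [hs, hk]
    rw [Prod.mk.injEq]
    have hmod : (t+1) % 2 = (t-1) % 2 := by omega
    have hcast : ((t+1 : ℕ):ℚ) = ((t-1:ℕ):ℚ) + 2 := by
      have : (t+1 : ℕ) = (t-1) + 2 := by omega
      rw [this]
      push_cast
      ring
    constructor
    · rw [hmod]
      push_cast
      ring
    · rw [hcast]
      ring
  have e5 : pt a₁ b₁ t (i + (t+1) % 2) = (s + 1/2, k + 1/2) := by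
    unfold pt
    rw [hs, hk]
    rw [Prod.mk.injEq]
    have hcast : ((t : ℕ):ℚ) = ((t-1:ℕ):ℚ) + 1 := by
      have : t = (t-1) + 1 := by omega
      nth_rewrite 1 [this]
      push_cast
      ring
    rcases Nat.mod_two_eq_zero_or_one t with hpar | hpar
    · have hm1 : (t+1) % 2 = 1 := by omega
      have hm2 : (t-1) % 2 = 1 := by omega
      rw [hpar, hm1, hm2]
      constructor
      · push_cast
        ring
      · rw [hcast]
        ring
    · have hm1 : (t+1) % 2 = 0 := by omega
      have hm2 : (t-1) % 2 = 0 := by omega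
      rw [hpar, hm1, hm2]
      constructor
      · push_cast
        ring
      · rw [hcast]
        ring
  rw [e1] at m1
  rw [e2] at m2
  rw [e3] at m3
  rw [e4] at m4
  rw [e5] at m5
  have h := hU s k m1 m2 m3 m4 m5
  rw [e1, e2, e3, e4, e5]
  linarith

end Wrapper
end BLR


set_option maxHeartbeats 3000000 in
open BLR in
/-- Auxiliary lemma: a discrete harmonic function on a long diamond rectangle that is
bounded by `M` on the two bottom diagonals and on at least half of the top diagonal is
bounded by `M·C₁^{a(R)}` on the whole rectangle. -/
theorem bound_on_long_rectangle :
    ∃ C₁ : ℝ, 1 < C₁ ∧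
      ∀ a₁ a₂ b₁ b₂ : ℚ, HalfInt a₁ → HalfInt a₂ → HalfInt b₁ → HalfInt b₂ →
        (∃ n : ℤ, a₁ + b₁ = (n : ℚ)) → a₁ ≤ a₂ → b₁ ≤ b₂ →
        10 * (b₂ - b₁ + 1/2) ≤ a₂ - a₁ + 1/2 →
        ∀ M : ℝ, 0 < M →
        ∀ U : ℚ × ℚ → ℝ, DHarmOn U (dRect a₁ a₂ b₁ b₂) →
        (∀ s : ℚ, (s, b₁) ∈ dRect a₁ a₂ b₁ b₂ → |U (s, b₁)| ≤ M) →
        (∀ s : ℚ, (s, b₁ + 1/2) ∈ dRect a₁ a₂ b₁ b₂ → |U (s, b₁ + 1/2)| ≤ M) →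
        ((((dRect a₁ a₂ b₂ b₂)).ncard : ℝ) ≤
          2 * ((dRect a₁ a₂ b₂ b₂ ∩ {p | |U p| ≤ M}).ncard : ℝ)) →
        ∀ p ∈ dRect a₁ a₂ b₁ b₂, |U p| ≤ M * C₁ ^ (((a₂ - a₁ + 1/2 : ℚ)) : ℝ) := by
  refine ⟨(2:ℝ)^(36:ℕ), by norm_num, ?_⟩
  intro a₁ a₂ b₁ b₂ ha₁ ha₂ hb₁ hb₂ hab ha hb hlong M hM U hU hU0 hU1 hUtop p hp
  classical
  obtain ⟨za, hza⟩ := ha₁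
  obtain ⟨za2, hza2⟩ := ha₂
  obtain ⟨zb, hzb⟩ := hb₁
  obtain ⟨zb2, hzb2⟩ := hb₂
  obtain ⟨z, hz⟩ := hab
  obtain ⟨A, hA⟩ : ∃ A : ℕ, (A:ℚ) = 2*(a₂ - a₁) := by
    have h1 : za ≤ za2 := by
      rw [hza, hza2] at ha
      have : (za:ℚ) ≤ za2 := by linarith
      exact_mod_cast this
    refine ⟨(za2 - za).toNat, ?_⟩
    have h2 : ((za2 - za).toNat : ℤ) = za2 - za := Int.toNat_of_nonneg (by omega)
    have h3 : (((za2 - za).toNat : ℕ) : ℚ) = ((za2 : ℚ) - za) := by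
      rw [← Int.cast_natCast (R := ℚ), h2]
      push_cast
      ring
    rw [h3, hza, hza2]
    ring
  obtain ⟨m, hm⟩ : ∃ m : ℕ, (m:ℚ) = 2*(b₂ - b₁) := by
    have h1 : zb ≤ zb2 := by
      rw [hzb, hzb2] at hb
      have : (zb:ℚ) ≤ zb2 := by linarith
      exact_mod_cast this
    refine ⟨(zb2 - zb).toNat, ?_⟩
    have h2 : ((zb2 - zb).toNat : ℤ) = zb2 - zb := Int.toNat_of_nonneg (by omega)
    have h3 : (((zb2 - zb).toNat : ℕ) : ℚ) = ((zb2 : ℚ) - zb) := by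
      rw [← Int.cast_natCast (R := ℚ), h2]
      push_cast
      ring
    rw [h3, hzb, hzb2]
    ring
  have hAm : 10*m + 9 ≤ A := by
    have h1 : (10*m + 10 : ℚ) ≤ (A:ℚ) + 1 := by
      have e1 : b₂ - b₁ = (m:ℚ)/2 := by linarith
      have e2 : a₂ - a₁ = (A:ℚ)/2 := by linarith
      rw [e1, e2] at hlong
      linarith
    have h2 : (10*m + 10 : ℕ) ≤ A + 1 := by exact_mod_cast h1
    omega
  -- exponent comparison
  set x : ℝ := (((a₂ - a₁ + 1/2 : ℚ)) : ℝ) with hxdef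
  have hxval : x = ((A:ℝ)+1)/2 := by
    rw [hxdef]
    have e2 : a₂ - a₁ + 1/2 = ((A:ℚ)+1)/2 := by linarith
    rw [e2]
    push_cast
    ring
  have hxpos : 0 ≤ x := by
    rw [hxval]
    positivity
  have hCpow : ∀ y : ℕ, (y:ℝ) ≤ 18*(A:ℝ) + 18 → (2:ℝ)^y ≤ ((2:ℝ)^(36:ℕ)) ^ x := by
    intro y hy
    have e1 : ((2:ℝ)^(36:ℕ)) ^ x = (2:ℝ) ^ ((36:ℝ) * x) := by
      rw [← Real.rpow_natCast (2:ℝ) 36, ← Real.rpow_mul (by norm_num)]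
      norm_num
    have e2 : (2:ℝ)^y = (2:ℝ) ^ ((y:ℕ):ℝ) := (Real.rpow_natCast (2:ℝ) y).symm
    rw [e1, e2]
    apply Real.rpow_le_rpow_of_exponent_le (by norm_num)
    rw [hxval]
    linarith
  have hCone : (1:ℝ) ≤ ((2:ℝ)^(36:ℕ)) ^ x := by
    have := hCpow 0 (by push_cast; positivity)
    simpa using this
  -- representation of p
  obtain ⟨t, i, htm, hi, hpt⟩ := pt_rep a₁ a₂ b₁ b₂ za zb z A m hza hzb hz hA hm p hp
  rcases lt_or_ge m 2 with hmlt | hm2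
  · -- trivial case: only rows 0 and 1
    have hUb : |U p| ≤ M := by
      rcases (by omega : t = 0 ∨ t = 1) with ht0 | ht1
      · subst ht0
        have e1 : ((pt a₁ b₁ 0 i).1, b₁) = pt a₁ b₁ 0 i := by
          unfold pt
          norm_num
        have := hU0 ((pt a₁ b₁ 0 i).1) (by rw [e1, ← hpt]; exact hp)
        rw [e1, ← hpt] at this
        exact this
      · subst ht1
        have e1 : ((pt a₁ b₁ 1 i).1, b₁ + 1/2) = pt a₁ b₁ 1 i := by
          unfold pt
          norm_num
        have := hU1 ((pt a₁ b₁ 1 i).1) (by rw [e1, ← hpt]; exact hp)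
        rw [e1, ← hpt] at this
        exact this
    calc |U p| ≤ M := hUb
      _ ≤ M * ((2:ℝ)^(36:ℕ)) ^ x := by nlinarith [hCone, hM]
  · -- main case
    set nstar : ℕ := (A - 3)/2 with hnstar
    set N : ℕ := (A - m % 2)/2 with hN
    set f : ℕ → ℕ → ℝ := fun t i => U (pt a₁ b₁ t i) / M with hf
    have hUabs : ∀ t' i', |U (pt a₁ b₁ t' i')| = M * |f t' i'| := by
      intro t' i'
      rw [hf]
      simp only
      rw [abs_div, abs_of_pos hM]
      field_simp
    have hf0 : ∀ i', 2*i' ≤ A → |f 0 i'| ≤ 1 := by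
      intro i' hi'
      have mem := pt_mem a₁ a₂ b₁ b₂ za zb z A m hza hzb hz hA hm 0 i' (by omega) (by omega)
      have e1 : ((pt a₁ b₁ 0 i').1, b₁) = pt a₁ b₁ 0 i' := by
        unfold pt
        norm_num
      have hb := hU0 ((pt a₁ b₁ 0 i').1) (by rw [e1]; exact mem)
      rw [e1] at hb
      rw [hf]
      simp only
      rw [abs_div, abs_of_pos hM, div_le_one hM]
      exact hb
    have hf1 : ∀ i', 2*i' + 1 ≤ A → |f 1 i'| ≤ 1 := by
      intro i' hi'
      have mem := pt_mem a₁ a₂ b₁ b₂ za zb z A m hza hzb hz hA hm 1 i' (by omega) (by omega)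
      have e1 : ((pt a₁ b₁ 1 i').1, b₁ + 1/2) = pt a₁ b₁ 1 i' := by
        unfold pt
        norm_num
      have hb := hU1 ((pt a₁ b₁ 1 i').1) (by rw [e1]; exact mem)
      rw [e1] at hb
      rw [hf]
      simp only
      rw [abs_div, abs_of_pos hM, div_le_one hM]
      exact hb
    have hfrelU := frel a₁ a₂ b₁ b₂ za zb z A m hza hzb hz hA hm U hU
    have hfrel : ∀ t', 1 ≤ t' → t' + 1 ≤ m → ∀ i', i' + 1 ≤ (A - (t'+1) % 2)/2 →
        f (t'+1) i' + f (t'+1) (i'+1) + f (t'-1) i' + f (t'-1) (i'+1)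
          = 4 * f t' (i' + (t'+1) % 2) := by
      intro t' h1 h2 i' h3
      have := hfrelU t' h1 h2 i' h3
      rw [hf]
      simp only
      field_simp
      linarith
    have hrelC : ∀ t', 1 ≤ t' → t' + 1 ≤ m → ∀ i', i' ≤ nstar →
        f (t'+1) i' + f (t'+1) (i'+1) + f (t'-1) i' + f (t'-1) (i'+1)
          = 4 * f t' (i' + (t' + 1) % 2) := by
      intro t' h1 h2 i' h3
      exact hfrel t' h1 h2 i' (by omega)
    -- top row counting
    have hbeq : ∀ i', (pt a₁ b₁ m i').2 = b₂ := by
      intro i'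
      show b₁ + (m:ℚ)/2 = b₂
      linarith
    have htopchar : ∀ pp, pp ∈ dRect a₁ a₂ b₂ b₂ ↔ ∃ i' ≤ N, pp = pt a₁ b₁ m i' := by
      intro pp
      constructor
      · intro hpp
        obtain ⟨hd, h1, h2, h3, h4⟩ := hpp
        have hpp2 : pp ∈ dRect a₁ a₂ b₁ b₂ := by
          refine ⟨hd, h1, h2, ?_, h4⟩
          calc b₁ ≤ b₂ := hb
            _ ≤ pp.2 := h3
        obtain ⟨t', i', ht', hi', he'⟩ :=
          pt_rep a₁ a₂ b₁ b₂ za zb z A m hza hzb hz hA hm pp hpp2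
        have htm' : t' = m := by
          have e1 : pp.2 = b₁ + (t':ℚ)/2 := by rw [he']; rfl
          have e2 : pp.2 = b₂ := le_antisymm h4 h3
          have e3 : (t':ℚ) = (m:ℚ) := by
            rw [e1] at e2
            linarith
          exact_mod_cast e3
        subst htm'
        exact ⟨i', by omega, he'⟩
      · rintro ⟨i', hi', rfl⟩
        have h' := pt_mem a₁ a₂ b₁ b₂ za zb z A m hza hzb hz hA hm m i' le_rfl (by omega)
        obtain ⟨hd, h1, h2, h3, h4⟩ := h'
        exact ⟨hd, h1, h2, le_of_eq (hbeq i').symm, le_of_eq (hbeq i')⟩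
    have hptinj : ∀ i' j', pt a₁ b₁ m i' = pt a₁ b₁ m j' → i' = j' := by
      intro i' j' he
      have e1 : (pt a₁ b₁ m i').1 = (pt a₁ b₁ m j').1 := by rw [he]
      have e2 : (i':ℚ) = (j':ℚ) := by
        have : a₁ + ((m % 2 : ℕ) : ℚ)/2 + (i':ℚ) = a₁ + ((m % 2 : ℕ) : ℚ)/2 + (j':ℚ) := e1
        linarith
      exact_mod_cast e2
    set S : Finset ℕ := (Finset.range (N+1)).filter (fun i' => |U (pt a₁ b₁ m i')| ≤ M)
      with hS
    have hset1 : dRect a₁ a₂ b₂ b₂ = ↑((Finset.range (N+1)).image (pt a₁ b₁ m)) := by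
      ext pp
      rw [htopchar pp]
      simp only [Finset.coe_image, Set.mem_image, Finset.mem_coe, Finset.mem_range]
      constructor
      · rintro ⟨i', hi', rfl⟩
        exact ⟨i', by omega, rfl⟩
      · rintro ⟨i', hi', rfl⟩
        exact ⟨i', by omega, rfl⟩
    have hset2 : dRect a₁ a₂ b₂ b₂ ∩ {pp | |U pp| ≤ M} = ↑(S.image (pt a₁ b₁ m)) := by
      ext pp
      constructor
      · rintro ⟨hmem, hval⟩
        obtain ⟨i', hi', rfl⟩ := (htopchar pp).mp hmem
        refine Finset.mem_coe.mpr (Finset.mem_image.mpr ⟨i', ?_, rfl⟩)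
        rw [hS, Finset.mem_filter]
        exact ⟨Finset.mem_range.mpr (by omega), hval⟩
      · intro hpp
        obtain ⟨i', hi', rfl⟩ := Finset.mem_image.mp (Finset.mem_coe.mp hpp)
        rw [hS, Finset.mem_filter, Finset.mem_range] at hi'
        constructor
        · exact (htopchar _).mpr ⟨i', by omega, rfl⟩
        · exact hi'.2
    have hinj1 : Set.InjOn (pt a₁ b₁ m) ↑(Finset.range (N+1)) := by
      intro u _ v _ he
      exact hptinj u v he
    have hinj2 : Set.InjOn (pt a₁ b₁ m) ↑S := by
      intro u _ v _ he
      exact hptinj u v he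
    have hcount1 : (dRect a₁ a₂ b₂ b₂).ncard = N + 1 := by
      rw [hset1, Set.ncard_coe_finset, Finset.card_image_of_injOn hinj1, Finset.card_range]
    have hcount2 : (dRect a₁ a₂ b₂ b₂ ∩ {pp | |U pp| ≤ M}).ncard = S.card := by
      rw [hset2, Set.ncard_coe_finset, Finset.card_image_of_injOn hinj2]
    have hScard : N + 1 ≤ 2 * S.card := by
      rw [hcount1, hcount2] at hUtop
      exact_mod_cast hUtop
    have hSsub : S ⊆ Finset.range (N+1) := Finset.filter_subset _ _
    have hSb : ∀ i' ∈ S, |f m i'| ≤ 1 := by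
      intro i' hi'
      rw [hS, Finset.mem_filter] at hi'
      rw [hf]
      simp only
      rw [abs_div, abs_of_pos hM, div_le_one hM]
      exact hi'.2
    have hNn : nstar ≤ N := by omega
    have hNn2 : N ≤ nstar + 2 := by omega
    have h0C : ∀ i', i' ≤ nstar + 1 → |f 0 i'| ≤ 1 := by
      intro i' hi'
      exact hf0 i' (by omega)
    have h1C : ∀ i', i' ≤ nstar + 1 → |f 1 i'| ≤ 1 := by
      intro i' hi'
      exact hf1 i' (by omega)
    have Hcore1 := core_bound A m nstar N 1 f S hrelC h0C h1C hm2 hAm hnstar hNn hNn2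
      hSsub hScard hSb
    -- reflected system (no local definition: work with explicit terms)
    have hrelC' : ∀ t', 1 ≤ t' → t' + 1 ≤ m → ∀ j, j ≤ nstar →
        f (t'+1) ((A - (t'+1) % 2)/2 - j) + f (t'+1) ((A - (t'+1) % 2)/2 - (j+1))
          + f (t'-1) ((A - (t'-1) % 2)/2 - j) + f (t'-1) ((A - (t'-1) % 2)/2 - (j+1))
          = 4 * f t' ((A - t' % 2)/2 - (j + (t' + (A+1) % 2) % 2)) := by
      intro t' h1 h2 j h3
      have hrel0 := hfrel t' h1 h2 ((A - (t'+1) % 2)/2 - 1 - j) (by omega)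
      have i1 : (A-(t'+1)%2)/2 - j = ((A-(t'+1)%2)/2 - 1 - j) + 1 := by omega
      have i2 : (A-(t'+1)%2)/2 - (j+1) = (A-(t'+1)%2)/2 - 1 - j := by omega
      have i3 : (A-(t'-1)%2)/2 - j = ((A-(t'+1)%2)/2 - 1 - j) + 1 := by omega
      have i4 : (A-(t'-1)%2)/2 - (j+1) = (A-(t'+1)%2)/2 - 1 - j := by omega
      have i5 : (A-t'%2)/2 - (j + (t' + (A+1)%2)%2) = ((A-(t'+1)%2)/2 - 1 - j) + (t'+1)%2 := by
        omega
      rw [i1, i2, i3, i4, i5]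
      linarith [hrel0]
    have h0C' : ∀ i', i' ≤ nstar + 1 → |f 0 ((A - 0 % 2)/2 - i')| ≤ 1 := by
      intro i' _
      exact hf0 _ (by omega)
    have h1C' : ∀ i', i' ≤ nstar + 1 → |f 1 ((A - 1 % 2)/2 - i')| ≤ 1 := by
      intro i' _
      exact hf1 _ (by omega)
    set S' : Finset ℕ := S.image (fun i' => N - i') with hS'
    have hSsub' : S' ⊆ Finset.range (N+1) := by
      intro j hj
      rw [hS', Finset.mem_image] at hj
      obtain ⟨i', _, rfl⟩ := hj
      rw [Finset.mem_range]
      omega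
    have hScard' : N + 1 ≤ 2 * S'.card := by
      have : S'.card = S.card := by
        rw [hS']
        apply Finset.card_image_of_injOn
        intro u hu v hv he
        have hu' := Finset.mem_range.mp (hSsub hu)
        have hv' := Finset.mem_range.mp (hSsub hv)
        simp only at he
        omega
      omega
    have hSb' : ∀ j ∈ S', |f m ((A - m % 2)/2 - j)| ≤ 1 := by
      intro j hj
      rw [hS', Finset.mem_image] at hj
      obtain ⟨i', hi', rfl⟩ := hj
      have hi'' := Finset.mem_range.mp (hSsub hi')
      have e2 : (A - m % 2)/2 - (N - i') = i' := by omega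
      rw [e2]
      exact hSb i' hi'
    have Hcore2 := core_bound A m nstar N ((A+1) % 2)
      (fun t' j => f t' ((A - t' % 2)/2 - j)) S' hrelC' h0C' h1C' hm2 hAm hnstar hNn hNn2
      hSsub' hScard' hSb'
    -- conclude
    have hft : |f t i| ≤ 2^(9*A) := by
      rcases le_or_gt i nstar with hc | hc
      · exact Hcore1 t htm i hc
      · have hj : (A - t % 2)/2 - i ≤ nstar := by omega
        have key : |f t ((A - t % 2)/2 - ((A - t % 2)/2 - i))| ≤ 2^(9*A) :=
          Hcore2 t htm ((A - t % 2)/2 - i) hj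
        have e2 : (A - t % 2)/2 - ((A - t % 2)/2 - i) = i := by omega
        rw [e2] at key
        exact key
    have hfin : |U p| ≤ M * 2^(9*A) := by
      rw [hpt, hUabs t i]
      nlinarith [hft, hM]
    calc |U p| ≤ M * 2^(9*A) := hfin
      _ ≤ M * ((2:ℝ)^(36:ℕ)) ^ x := by
        have h2 := hCpow (9*A) (by push_cast; linarith)
        nlinarith [hM]
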